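/- arXiv:2406.00920 — 4 statements merged into one kernel-verified Lean document; each statement's English description precedes it below -/
import Mathlib

section
/- Let x_1, …, x_b be square-integrable random vectors in ℝ^d defined on a common probability space together with a random variable B, and suppose there is ρ ∈ [0, 1] such that for all i ≠ j, tr Cov(x_i, x_j | B) ≤ ρ √(tr 𝕍[x_i | B]) √(tr 𝕍[x_j | B]) almost surely. Define S = Σ_{i=1}^b √(tr 𝕍[x_i | B]) and V = Σ_{i=1}^b tr 𝕍[x_i | B]. Then E[tr 𝕍[Σ_{i=1}^b x_i | B]] ≤ ρ 𝕍[S] + ρ (E[S])² + (1 − ρ) E[V], with equality when the conditional covariance inequality holds with equality. -/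
open MeasureTheory ProbabilityTheory
open scoped ENNReal

/-- `tr 𝕍[v] = E‖v − E v‖₂²` for a random vector `v`. -/
noncomputable def trVar {Ω : Type*} [MeasurableSpace Ω] (μ : Measure Ω)
    {E : Type*} [NormedAddCommGroup E] [NormedSpace ℝ E] [CompleteSpace E]
    (v : Ω → E) : ℝ :=
  ∫ ω, ‖v ω - ∫ ω', v ω' ∂μ‖ ^ 2 ∂μ

/-- `tr Cov(u, v) = E⟨u − E u, v − E v⟩` for random vectors `u, v`. -/
noncomputable def trCov {Ω : Type*} [MeasurableSpace Ω] (μ : Measure Ω)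
    {E : Type*} [NormedAddCommGroup E] [InnerProductSpace ℝ E] [CompleteSpace E]
    (u v : Ω → E) : ℝ :=
  ∫ ω, @inner ℝ _ _ (u ω - ∫ ω', u ω' ∂μ) (v ω - ∫ ω', v ω' ∂μ) ∂μ

/-- Bregman divergence `D_φ(x, y) = φ(x) − φ(y) − ⟨∇φ(y), x − y⟩`. -/
noncomputable def breg {E : Type*} [NormedAddCommGroup E] [InnerProductSpace ℝ E]
    [CompleteSpace E] (φ : E → ℝ) (x y : E) : ℝ :=
  φ x - φ y - @inner ℝ _ _ (gradient φ y) (x - y)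

/-- Conditional trace variance `tr 𝕍[v | m] = E[‖v − E[v|m]‖² | m]`. -/
noncomputable def condTrVar {Ω : Type*} [MeasurableSpace Ω] (μ : Measure Ω)
    (m : MeasurableSpace Ω)
    {E : Type*} [NormedAddCommGroup E] [InnerProductSpace ℝ E] [CompleteSpace E]
    (v : Ω → E) : Ω → ℝ :=
  μ[fun ω => ‖v ω - (μ[v | m]) ω‖ ^ 2 | m]

/-- Conditional trace covariance `tr Cov(u, v | m) = E[⟨u − E[u|m], v − E[v|m]⟩ | m]`. -/
noncomputable def condTrCov {Ω : Type*} [MeasurableSpace Ω] (μ : Measure Ω)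
    (m : MeasurableSpace Ω)
    {E : Type*} [NormedAddCommGroup E] [InnerProductSpace ℝ E] [CompleteSpace E]
    (u v : Ω → E) : Ω → ℝ :=
  μ[fun ω => @inner ℝ _ _ (u ω - (μ[u | m]) ω) (v ω - (μ[v | m]) ω) | m]

section Aux

variable {Ω : Type*} {m : MeasurableSpace Ω} [m0 : MeasurableSpace Ω]
  {μ : Measure Ω} [IsProbabilityMeasure μ]
  {E : Type*} [NormedAddCommGroup E] [InnerProductSpace ℝ E] [CompleteSpace E]

lemma memLp_two_condexp (hm : m ≤ m0) {f : Ω → E} (hf : MemLp f 2 μ) :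
    MemLp (μ[f|m]) 2 μ := by
  let g : lpMeas E ℝ m 2 μ := condExpL2 E ℝ hm (MemLp.toLp f hf)
  have hg : μ[f|m] =ᵐ[μ] (g : Lp E 2 μ) := by
    refine (ae_eq_condExp_of_forall_setIntegral_eq hm
      (hf.integrable one_le_two) ?_ ?_ ?_).symm
    · intro s _ _
      exact (integrable_condExpL2_of_isFiniteMeasure hm).integrableOn
    · intro s hs hμs
      rw [integral_condExpL2_eq hm (hf.toLp f) hs hμs.ne]
      exact setIntegral_congr_ae (hm s hs) (hf.coeFn_toLp.mono fun ω hω _ => hω)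
    · exact aestronglyMeasurable_condExpL2 hm _
  exact (Lp.memLp (g : Lp E 2 μ)).ae_eq hg.symm

lemma integrable_inner_of_memLp_two {f g : Ω → E} (hf : MemLp f 2 μ) (hg : MemLp g 2 μ) :
    Integrable (fun ω => @inner ℝ _ _ (f ω) (g ω)) μ := by
  have h := L2.integrable_inner (𝕜 := ℝ) (hf.toLp f) (hg.toLp g)
  refine h.congr ?_
  filter_upwards [hf.coeFn_toLp, hg.coeFn_toLp] with ω h1 h2
  rw [h1, h2]

end Aux

theorem aux_ecvs
    {d b : ℕ} {Ω : Type*} {m : MeasurableSpace Ω} [m0 : MeasurableSpace Ω]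
    (μ : Measure Ω) [IsProbabilityMeasure μ] (hm : m ≤ m0)
    (x : Fin b → Ω → EuclideanSpace ℝ (Fin d))
    (hmem : ∀ i, MemLp (x i) 2 μ)
    (ρ : ℝ) (hρ : ρ ∈ Set.Icc (0 : ℝ) 1)
    (hcov : ∀ i j, i ≠ j →
      ∀ᵐ ω ∂μ,
        condTrCov μ (m) (x i) (x j) ω
          ≤ ρ * Real.sqrt (condTrVar μ (m) (x i) ω)
              * Real.sqrt (condTrVar μ (m) (x j) ω)) :
    (∫ ω, condTrVar μ (m)
          (fun ω' => ∑ i, x i ω') ω ∂μ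
        ≤ ρ * ((∫ ω, (∑ i, Real.sqrt
                (condTrVar μ (m) (x i) ω)) ^ 2 ∂μ)
              - (∫ ω, ∑ i, Real.sqrt
                  (condTrVar μ (m) (x i) ω) ∂μ) ^ 2)
          + ρ * (∫ ω, ∑ i, Real.sqrt
                  (condTrVar μ (m) (x i) ω) ∂μ) ^ 2
          + (1 - ρ) * ∫ ω, ∑ i,
              condTrVar μ (m) (x i) ω ∂μ) ∧
    ((∀ i j, i ≠ j →
        ∀ᵐ ω ∂μ,
          condTrCov μ (m) (x i) (x j) ω
            = ρ * Real.sqrt (condTrVar μ (m) (x i) ω)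
                * Real.sqrt (condTrVar μ (m) (x j) ω)) →
      ∫ ω, condTrVar μ (m)
          (fun ω' => ∑ i, x i ω') ω ∂μ
        = ρ * ((∫ ω, (∑ i, Real.sqrt
                (condTrVar μ (m) (x i) ω)) ^ 2 ∂μ)
              - (∫ ω, ∑ i, Real.sqrt
                  (condTrVar μ (m) (x i) ω) ∂μ) ^ 2)
          + ρ * (∫ ω, ∑ i, Real.sqrt
                  (condTrVar μ (m) (x i) ω) ∂μ) ^ 2
          + (1 - ρ) * ∫ ω, ∑ i,
              condTrVar μ (m) (x i) ω ∂μ) := by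
  classical
  -- basic integrability facts
  have hxint : ∀ i, Integrable (x i) μ := fun i => (hmem i).integrable one_le_two
  have hd2 : ∀ i, MemLp (fun ω => x i ω - (μ[x i|m]) ω) 2 μ :=
    fun i => (hmem i).sub (memLp_two_condexp hm (hmem i))
  have hinner : ∀ i j, Integrable
      (fun ω => @inner ℝ _ _ (x i ω - (μ[x i|m]) ω) (x j ω - (μ[x j|m]) ω)) μ :=
    fun i j => integrable_inner_of_memLp_two (hd2 i) (hd2 j)
  have hv_int : ∀ i, Integrable (condTrVar μ m (x i)) μ := fun i => integrable_condExp
  have hcv_int : ∀ i j, Integrable (condTrCov μ m (x i) (x j)) μ := fun i j => integrable_condExp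
  have hv_nonneg : ∀ i, 0 ≤ᵐ[μ] condTrVar μ m (x i) := fun i =>
    condExp_nonneg (Filter.Eventually.of_forall fun ω => by positivity)
  have hv_sm : ∀ i, StronglyMeasurable (condTrVar μ m (x i)) := fun i =>
    stronglyMeasurable_condExp.mono hm
  have hss_int : ∀ i j, Integrable
      (fun ω => Real.sqrt (condTrVar μ m (x i) ω) * Real.sqrt (condTrVar μ m (x j) ω)) μ := by
    intro i j
    refine Integrable.mono' (((hv_int i).add (hv_int j)).div_const 2)
      (((Real.continuous_sqrt.comp_stronglyMeasurable (hv_sm i)).mul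
        (Real.continuous_sqrt.comp_stronglyMeasurable (hv_sm j))).aestronglyMeasurable) ?_
    filter_upwards [hv_nonneg i, hv_nonneg j] with ω h1 h2
    simp only [Pi.zero_apply] at h1 h2
    rw [Real.norm_eq_abs, abs_of_nonneg (mul_nonneg (Real.sqrt_nonneg _) (Real.sqrt_nonneg _))]
    simp only [Pi.add_apply]
    nlinarith [two_mul_le_add_sq (Real.sqrt (condTrVar μ m (x i) ω))
        (Real.sqrt (condTrVar μ m (x j) ω)),
      Real.sq_sqrt h1, Real.sq_sqrt h2, Real.sqrt_nonneg (condTrVar μ m (x i) ω),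
      Real.sqrt_nonneg (condTrVar μ m (x j) ω)]
  -- conditional expectation of the sum
  have hfun : (fun ω' => ∑ i, x i ω') = ∑ i, x i := by ext ω'; simp
  have hcond_sum : μ[(fun ω' => ∑ i, x i ω')|m] =ᵐ[μ] fun ω => ∑ i, (μ[x i|m]) ω := by
    rw [hfun]
    refine (condExp_finsetSum (fun i _ => hxint i) m).trans ?_
    exact Filter.Eventually.of_forall fun ω => by simp
  -- pointwise expansion of the squared norm
  have hkey : (fun ω => ‖(∑ i, x i ω) - (μ[(fun ω' => ∑ i, x i ω')|m]) ω‖ ^ 2)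
      =ᵐ[μ] fun ω => ∑ i, ∑ j, @inner ℝ _ _ (x i ω - (μ[x i|m]) ω) (x j ω - (μ[x j|m]) ω) := by
    filter_upwards [hcond_sum] with ω hω
    rw [hω, ← Finset.sum_sub_distrib, ← real_inner_self_eq_norm_sq, sum_inner]
    exact Finset.sum_congr rfl fun i _ => inner_sum _ _ _
  have hrow : ∀ i, μ[(fun ω => ∑ j, @inner ℝ _ _ (x i ω - (μ[x i|m]) ω) (x j ω - (μ[x j|m]) ω))|m]
      =ᵐ[μ] fun ω => ∑ j, condTrCov μ m (x i) (x j) ω := by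
    intro i
    have hfun2 : (fun ω => ∑ j, @inner ℝ _ _ (x i ω - (μ[x i|m]) ω) (x j ω - (μ[x j|m]) ω))
        = ∑ j, fun ω => @inner ℝ _ _ (x i ω - (μ[x i|m]) ω) (x j ω - (μ[x j|m]) ω) := by ext ω; simp
    rw [hfun2]
    refine (condExp_finsetSum (fun j _ => hinner i j) m).trans ?_
    refine Filter.Eventually.of_forall fun ω => ?_
    simp only [Finset.sum_apply]
    rfl
  have hvar_sum : condTrVar μ m (fun ω' => ∑ i, x i ω')
      =ᵐ[μ] fun ω => ∑ i, ∑ j, condTrCov μ m (x i) (x j) ω := by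
    refine (condExp_congr_ae hkey).trans ?_
    have hfun3 : (fun ω => ∑ i, ∑ j, @inner ℝ _ _ (x i ω - (μ[x i|m]) ω) (x j ω - (μ[x j|m]) ω))
        = ∑ i, fun ω => ∑ j, @inner ℝ _ _ (x i ω - (μ[x i|m]) ω) (x j ω - (μ[x j|m]) ω) := by ext ω; simp
    rw [hfun3]
    refine (condExp_finsetSum (fun i _ =>
      integrable_finset_sum _ fun j _ => hinner i j) m).trans ?_
    filter_upwards [ae_all_iff.2 fun i => hrow i] with ω hω
    simp only [Finset.sum_apply]
    exact Finset.sum_congr rfl fun i _ => hω i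
  -- key integral identities
  have F1 : ∫ ω, condTrVar μ m (fun ω' => ∑ i, x i ω') ω ∂μ
      = ∑ i, ∑ j, ∫ ω, condTrCov μ m (x i) (x j) ω ∂μ := by
    rw [integral_congr_ae hvar_sum,
      integral_finset_sum _ fun i _ => integrable_finset_sum _ fun j _ => hcv_int i j]
    exact Finset.sum_congr rfl fun i _ => integral_finset_sum _ fun j _ => hcv_int i j
  have hdiag : ∀ i, condTrCov μ m (x i) (x i) = condTrVar μ m (x i) := by
    intro i
    have hfun4 : (fun ω => @inner ℝ _ _ (x i ω - (μ[x i|m]) ω) (x i ω - (μ[x i|m]) ω))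
        = fun ω => ‖x i ω - (μ[x i|m]) ω‖ ^ 2 :=
      funext fun ω => real_inner_self_eq_norm_sq _
    unfold condTrCov condTrVar
    rw [hfun4]
  have F3 : ∫ ω, (∑ i, Real.sqrt (condTrVar μ m (x i) ω)) ^ 2 ∂μ
      = ∑ i, ∑ j, ∫ ω, Real.sqrt (condTrVar μ m (x i) ω)
          * Real.sqrt (condTrVar μ m (x j) ω) ∂μ := by
    have hpt : ∀ ω, (∑ i, Real.sqrt (condTrVar μ m (x i) ω)) ^ 2
        = ∑ i, ∑ j, Real.sqrt (condTrVar μ m (x i) ω)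
            * Real.sqrt (condTrVar μ m (x j) ω) := fun ω => by
      rw [sq, Finset.sum_mul_sum]
    simp_rw [hpt]
    rw [integral_finset_sum _ fun i _ => integrable_finset_sum _ fun j _ => hss_int i j]
    exact Finset.sum_congr rfl fun i _ => integral_finset_sum _ fun j _ => hss_int i j
  have F4 : ∀ i, ∫ ω, Real.sqrt (condTrVar μ m (x i) ω)
      * Real.sqrt (condTrVar μ m (x i) ω) ∂μ = ∫ ω, condTrVar μ m (x i) ω ∂μ := by
    intro i
    refine integral_congr_ae ?_
    filter_upwards [hv_nonneg i] with ω h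
    exact Real.mul_self_sqrt h
  have F5 : ∫ ω, ∑ i, condTrVar μ m (x i) ω ∂μ = ∑ i, ∫ ω, condTrVar μ m (x i) ω ∂μ :=
    integral_finset_sum _ fun i _ => hv_int i
  have split : ∀ f : Fin b → Fin b → ℝ,
      (∑ i, ∑ j, f i j) = (∑ i, f i i) + ∑ i, ∑ j ∈ Finset.univ.erase i, f i j := by
    intro f
    rw [← Finset.sum_add_distrib]
    exact Finset.sum_congr rfl fun i _ => (Finset.add_sum_erase _ _ (Finset.mem_univ i)).symm
  have hoffsplit : ∀ f : Fin b → Fin b → ℝ, ∑ i, ∑ j, f i j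
      = (∑ i, f i i) + ∑ i, ∑ j ∈ Finset.univ.erase i, f i j := split
  have hdiagsum : (∑ i, ∫ ω, condTrCov μ m (x i) (x i) ω ∂μ)
      = ∑ i, ∫ ω, condTrVar μ m (x i) ω ∂μ :=
    Finset.sum_congr rfl fun i _ => by rw [hdiag i]
  have hdiagsum2 : (∑ i, ∫ ω, Real.sqrt (condTrVar μ m (x i) ω)
        * Real.sqrt (condTrVar μ m (x i) ω) ∂μ)
      = ∑ i, ∫ ω, condTrVar μ m (x i) ω ∂μ :=
    Finset.sum_congr rfl fun i _ => F4 i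
  have harith : ∀ L X C D : ℝ, L ≤ ρ * X + (1 - ρ) * D →
      L ≤ ρ * (X - C ^ 2) + ρ * C ^ 2 + (1 - ρ) * D := by
    intro L X C D h
    nlinarith [h]
  have harith' : ∀ L X C D : ℝ, L = ρ * X + (1 - ρ) * D →
      L = ρ * (X - C ^ 2) + ρ * C ^ 2 + (1 - ρ) * D := by
    intro L X C D h
    rw [h]; ring
  constructor
  · refine harith _ _ _ _ ?_
    rw [F1, F3, F5,
      hoffsplit (fun i j => ∫ ω, condTrCov μ m (x i) (x j) ω ∂μ),
      hoffsplit (fun i j => ∫ ω, Real.sqrt (condTrVar μ m (x i) ω)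
        * Real.sqrt (condTrVar μ m (x j) ω) ∂μ)]
    rw [hdiagsum, hdiagsum2]
    have hoff : (∑ i, ∑ j ∈ Finset.univ.erase i, ∫ ω, condTrCov μ m (x i) (x j) ω ∂μ)
        ≤ ρ * ∑ i, ∑ j ∈ Finset.univ.erase i, ∫ ω, Real.sqrt (condTrVar μ m (x i) ω)
            * Real.sqrt (condTrVar μ m (x j) ω) ∂μ := by
      rw [Finset.mul_sum]
      refine Finset.sum_le_sum fun i _ => ?_
      rw [Finset.mul_sum]
      refine Finset.sum_le_sum fun j hj => ?_
      have hij : i ≠ j := (Finset.ne_of_mem_erase hj).symm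
      have h := integral_mono_ae (hcv_int i j) ((hss_int i j).const_mul ρ) ?_
      · rwa [integral_const_mul ρ] at h
      · filter_upwards [hcov i j hij] with ω hω
        rw [← mul_assoc]
        exact hω
    linarith [hoff]
  · intro hceq
    refine harith' _ _ _ _ ?_
    rw [F1, F3, F5,
      hoffsplit (fun i j => ∫ ω, condTrCov μ m (x i) (x j) ω ∂μ),
      hoffsplit (fun i j => ∫ ω, Real.sqrt (condTrVar μ m (x i) ω)
        * Real.sqrt (condTrVar μ m (x j) ω) ∂μ)]
    rw [hdiagsum, hdiagsum2]
    have hoff : (∑ i, ∑ j ∈ Finset.univ.erase i, ∫ ω, condTrCov μ m (x i) (x j) ω ∂μ)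
        = ρ * ∑ i, ∑ j ∈ Finset.univ.erase i, ∫ ω, Real.sqrt (condTrVar μ m (x i) ω)
            * Real.sqrt (condTrVar μ m (x j) ω) ∂μ := by
      rw [Finset.mul_sum]
      refine Finset.sum_congr rfl fun i _ => ?_
      rw [Finset.mul_sum]
      refine Finset.sum_congr rfl fun j hj => ?_
      have hij : i ≠ j := (Finset.ne_of_mem_erase hj).symm
      have h : ∫ ω, condTrCov μ m (x i) (x j) ω ∂μ
          = ∫ ω, ρ * (Real.sqrt (condTrVar μ m (x i) ω)
              * Real.sqrt (condTrVar μ m (x j) ω)) ∂μ := by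
        refine integral_congr_ae ?_
        filter_upwards [hceq i j hij] with ω hω
        rw [← mul_assoc]
        exact hω
      rw [h, integral_const_mul ρ]
    linarith [hoff]


/-- Expected conditional variance of a sum of correlated random vectors:
`E[tr 𝕍[Σᵢ xᵢ | B]] ≤ ρ 𝕍[S] + ρ (E S)² + (1 − ρ) E V`, where
`S = Σᵢ √(tr 𝕍[xᵢ | B])` and `V = Σᵢ tr 𝕍[xᵢ | B]`, with equality when the conditional
covariance inequality holds with equality. -/


theorem expected_conditional_variance_of_sum
    {d b : ℕ} {Ω β : Type*} [MeasurableSpace Ω] [MeasurableSpace β]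
    (μ : Measure Ω) [IsProbabilityMeasure μ]
    (B : Ω → β) (hBmeas : Measurable B)
    (x : Fin b → Ω → EuclideanSpace ℝ (Fin d))
    (hmem : ∀ i, MemLp (x i) 2 μ)
    (ρ : ℝ) (hρ : ρ ∈ Set.Icc (0 : ℝ) 1)
    (hcov : ∀ i j, i ≠ j →
      ∀ᵐ ω ∂μ,
        condTrCov μ (MeasurableSpace.comap B inferInstance) (x i) (x j) ω
          ≤ ρ * Real.sqrt (condTrVar μ (MeasurableSpace.comap B inferInstance) (x i) ω)
              * Real.sqrt (condTrVar μ (MeasurableSpace.comap B inferInstance) (x j) ω)) :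
    (∫ ω, condTrVar μ (MeasurableSpace.comap B inferInstance)
          (fun ω' => ∑ i, x i ω') ω ∂μ
        ≤ ρ * ((∫ ω, (∑ i, Real.sqrt
                (condTrVar μ (MeasurableSpace.comap B inferInstance) (x i) ω)) ^ 2 ∂μ)
              - (∫ ω, ∑ i, Real.sqrt
                  (condTrVar μ (MeasurableSpace.comap B inferInstance) (x i) ω) ∂μ) ^ 2)
          + ρ * (∫ ω, ∑ i, Real.sqrt
                  (condTrVar μ (MeasurableSpace.comap B inferInstance) (x i) ω) ∂μ) ^ 2
          + (1 - ρ) * ∫ ω, ∑ i,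
              condTrVar μ (MeasurableSpace.comap B inferInstance) (x i) ω ∂μ) ∧
    ((∀ i j, i ≠ j →
        ∀ᵐ ω ∂μ,
          condTrCov μ (MeasurableSpace.comap B inferInstance) (x i) (x j) ω
            = ρ * Real.sqrt (condTrVar μ (MeasurableSpace.comap B inferInstance) (x i) ω)
                * Real.sqrt (condTrVar μ (MeasurableSpace.comap B inferInstance) (x j) ω)) →
      ∫ ω, condTrVar μ (MeasurableSpace.comap B inferInstance)
          (fun ω' => ∑ i, x i ω') ω ∂μ
        = ρ * ((∫ ω, (∑ i, Real.sqrt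
                (condTrVar μ (MeasurableSpace.comap B inferInstance) (x i) ω)) ^ 2 ∂μ)
              - (∫ ω, ∑ i, Real.sqrt
                  (condTrVar μ (MeasurableSpace.comap B inferInstance) (x i) ω) ∂μ) ^ 2)
          + ρ * (∫ ω, ∑ i, Real.sqrt
                  (condTrVar μ (MeasurableSpace.comap B inferInstance) (x i) ω) ∂μ) ^ 2
          + (1 - ρ) * ∫ ω, ∑ i,
              condTrVar μ (MeasurableSpace.comap B inferInstance) (x i) ω ∂μ) :=
  aux_ecvs μ hBmeas.comap_le x hmem ρ hρ hcov
end

section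
/- Let x_i^{(j)} (i = 1,…,n; j = 1,…,m) be square-integrable random vectors in ℝ^d such that for each j the collection x_1^{(j)},…,x_n^{(j)} has E[x_i^{(j)}] = x̄_i and tr 𝕍[x_i^{(j)}] = σ_i², and such that for each i the replications over j are i.i.d. Let x_i^m = (1/m)Σ_{j=1}^m x_i^{(j)}, let B be a uniformly random size-b subset of {1,…,n} drawn without replacement with 1 < b < n, independent of all x_i^{(j)}, and let x_B^m = (1/b)Σ_{i∈B} x_i^m. Then tr 𝕍[x_B^m] ≤ ((n−b)/((n−1)mb))·(1/n)Σ_{i=1}^n σ_i² + (n(b−1)/((n−1)mb))·((1/n)Σ_{i=1}^n σ_i)² + ((n−b)/((n−1)b))·τ², where τ² = (1/n)Σ_{i=1}^n ‖x̄_i − x̄‖₂² and x̄ = (1/n)Σ_{i=1}^n x̄_i. -/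
open MeasureTheory ProbabilityTheory
open scoped ENNReal

section helpers
set_option linter.unusedSectionVars false
variable {Ω : Type*} [MeasurableSpace Ω] {μ : Measure Ω}
variable {E : Type*} [NormedAddCommGroup E] [InnerProductSpace ℝ E] [CompleteSpace E]

local notation "⟪" x ", " y "⟫" => @inner ℝ _ _ x y

lemma memLp_inner_int {f g : Ω → E} (hf : MemLp f 2 μ) (hg : MemLp g 2 μ) :
    Integrable (fun ω => ⟪f ω, g ω⟫) μ := by
  have hmul : MemLp (fun ω => ‖f ω‖ • ‖g ω‖) 1 μ := by
    exact MemLp.smul (𝕜 := ℝ) (p := 2) (q := 2) (r := 1) hg.norm hf.norm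
  have : Integrable (fun ω => ‖f ω‖ * ‖g ω‖) μ := by
    simpa [smul_eq_mul] using memLp_one_iff_integrable.mp hmul
  refine this.mono' (hf.1.inner hg.1) ?_
  filter_upwards with ω
  simpa [abs_of_nonneg (mul_nonneg (norm_nonneg _) (norm_nonneg _))]
    using abs_real_inner_le_norm (f ω) (g ω)

lemma integral_inner_le_sqrt {f g : Ω → E} (hf : MemLp f 2 μ) (hg : MemLp g 2 μ) :
    ∫ ω, ⟪f ω, g ω⟫ ∂μ ≤
      Real.sqrt (∫ ω, ‖f ω‖ ^ 2 ∂μ) * Real.sqrt (∫ ω, ‖g ω‖ ^ 2 ∂μ) := by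
  set F := hf.toLp f
  set G := hg.toLp g
  have hFf : (F : Ω → E) =ᵐ[μ] f := hf.coeFn_toLp
  have hGg : (G : Ω → E) =ᵐ[μ] g := hg.coeFn_toLp
  have hinner : ∫ ω, ⟪f ω, g ω⟫ ∂μ = ⟪F, G⟫ := by
    rw [L2.inner_def]
    refine integral_congr_ae ?_
    filter_upwards [hFf, hGg] with ω h1 h2
    rw [h1, h2]
  have hFn : Real.sqrt (∫ ω, ‖f ω‖ ^ 2 ∂μ) = ‖F‖ := by
    have : ∫ ω, ‖f ω‖ ^ 2 ∂μ = ⟪F, F⟫ := by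
      rw [L2.inner_def]
      refine integral_congr_ae ?_
      filter_upwards [hFf] with ω h1
      rw [h1, real_inner_self_eq_norm_sq]
    rw [this, real_inner_self_eq_norm_sq, Real.sqrt_sq (norm_nonneg _)]
  have hGn : Real.sqrt (∫ ω, ‖g ω‖ ^ 2 ∂μ) = ‖G‖ := by
    have : ∫ ω, ‖g ω‖ ^ 2 ∂μ = ⟪G, G⟫ := by
      rw [L2.inner_def]
      refine integral_congr_ae ?_
      filter_upwards [hGg] with ω h1
      rw [h1, real_inner_self_eq_norm_sq]
    rw [this, real_inner_self_eq_norm_sq, Real.sqrt_sq (norm_nonneg _)]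
  rw [hinner, hFn, hGn]
  exact real_inner_le_norm F G

lemma integral_norm_sq_sum {ι : Type*} (s : Finset ι) (f : ι → Ω → E)
    (hf : ∀ i ∈ s, MemLp (f i) 2 μ) :
    ∫ ω, ‖∑ i ∈ s, f i ω‖ ^ 2 ∂μ = ∑ i ∈ s, ∑ k ∈ s, ∫ ω, ⟪f i ω, f k ω⟫ ∂μ := by
  have h1 : ∀ ω, ‖∑ i ∈ s, f i ω‖ ^ 2 = ∑ i ∈ s, ∑ k ∈ s, ⟪f i ω, f k ω⟫ := by
    intro ω
    rw [← real_inner_self_eq_norm_sq, sum_inner]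
    exact Finset.sum_congr rfl fun i _ => inner_sum _ _ _
  simp_rw [h1]
  rw [integral_finset_sum _ fun i hi => integrable_finset_sum _
    fun k hk => memLp_inner_int (hf i hi) (hf k hk)]
  exact Finset.sum_congr rfl fun i hi =>
    integral_finset_sum _ fun k hk => memLp_inner_int (hf i hi) (hf k hk)

lemma trVar_congr {v w : Ω → E} (h : v =ᵐ[μ] w) : trVar μ v = trVar μ w := by
  have h1 : ∫ ω, v ω ∂μ = ∫ ω, w ω ∂μ := integral_congr_ae h
  unfold trVar
  rw [h1]
  exact integral_congr_ae (h.mono fun ω hω => by dsimp only; rw [hω])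

lemma trVar_le_moment [IsProbabilityMeasure μ] {v : Ω → E} (hv : MemLp v 2 μ) (a : E) :
    trVar μ v ≤ ∫ ω, ‖v ω - a‖ ^ 2 ∂μ := by
  set c := ∫ ω, v ω ∂μ with hc
  have hvi : Integrable v μ := hv.integrable one_le_two
  have hva : MemLp (fun ω => v ω - a) 2 μ := hv.sub (memLp_const a)
  have hsq : Integrable (fun ω => ‖v ω - a‖ ^ 2) μ :=
    (memLp_two_iff_integrable_sq_norm hva.1).mp hva
  have hinn : Integrable (fun ω => ⟪v ω - a, c - a⟫) μ :=
    (hvi.sub (integrable_const a)).inner_const (c - a)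
  have key : ∀ ω, ‖v ω - c‖ ^ 2
      = ‖v ω - a‖ ^ 2 - 2 * ⟪v ω - a, c - a⟫ + ‖c - a‖ ^ 2 := by
    intro ω
    have : v ω - c = (v ω - a) - (c - a) := by abel
    rw [this, ← real_inner_self_eq_norm_sq, inner_sub_sub_self]
    rw [← real_inner_self_eq_norm_sq, ← real_inner_self_eq_norm_sq]
    rw [real_inner_comm (c - a) (v ω - a)]
    ring
  have hint : ∫ ω, ⟪v ω - a, c - a⟫ ∂μ = ‖c - a‖ ^ 2 := by
    have h2 : ∫ ω, ⟪c - a, v ω - a⟫ ∂μ = ⟪c - a, c - a⟫ := by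
      have hi := integral_inner (𝕜 := ℝ) (f := fun ω => v ω - a)
        (hvi.sub (integrable_const a)) (c - a)
      rw [hi]
      congr 1
      rw [integral_sub hvi (integrable_const a), integral_const]
      simp [hc]
    calc ∫ ω, ⟪v ω - a, c - a⟫ ∂μ = ∫ ω, ⟪c - a, v ω - a⟫ ∂μ := by
          simp_rw [real_inner_comm]
      _ = ⟪c - a, c - a⟫ := h2
      _ = ‖c - a‖ ^ 2 := real_inner_self_eq_norm_sq _
  have e1 : Integrable (fun ω => ‖v ω - a‖ ^ 2 - 2 * ⟪v ω - a, c - a⟫) μ := by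
    exact hsq.sub (hinn.const_mul 2)
  have : trVar μ v = ∫ ω, ‖v ω - a‖ ^ 2 ∂μ - ‖c - a‖ ^ 2 := by
    unfold trVar
    rw [← hc]
    simp_rw [key]
    rw [integral_add e1 (integrable_const _),
      integral_sub hsq (hinn.const_mul 2), integral_const, integral_const_mul, hint]
    simp
    ring
  rw [this]
  have : (0:ℝ) ≤ ‖c - a‖ ^ 2 := sq_nonneg _
  linarith

end helpers

section indep
variable {Ω : Type*} [MeasurableSpace Ω] {μ : Measure Ω} [IsProbabilityMeasure μ] {d : ℕ}

local notation "⟪" x ", " y "⟫" => @inner ℝ _ _ x y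

lemma indep_cov_zero {f g : Ω → EuclideanSpace ℝ (Fin d)}
    (h : IndepFun f g μ) (hf : MemLp f 2 μ) (hg : MemLp g 2 μ) :
    ∫ ω, ⟪f ω - ∫ ω', f ω' ∂μ, g ω - ∫ ω', g ω' ∂μ⟫ ∂μ = 0 := by
  set a := ∫ ω', f ω' ∂μ with ha
  set c := ∫ ω', g ω' ∂μ with hcdef
  have hfi : Integrable f μ := hf.integrable one_le_two
  have hgi : Integrable g μ := hg.integrable one_le_two
  have hproj : ∀ t : Fin d, Measurable fun x : EuclideanSpace ℝ (Fin d) => x t := by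
    intro t
    exact (EuclideanSpace.proj (𝕜 := ℝ) t).continuous.measurable
  have key : ∀ ω, ⟪f ω - a, g ω - c⟫
      = ∑ t, (f ω t - a t) * (g ω t - c t) := by
    intro ω
    rw [PiLp.inner_apply]
    refine Finset.sum_congr rfl fun t _ => ?_
    simp [RCLike.inner_apply, mul_comm]
  simp_rw [key]
  have hft0 : ∀ t, Integrable (fun ω => f ω t) μ := fun t => by
    simpa using (EuclideanSpace.proj (𝕜 := ℝ) t).integrable_comp hfi
  have hgt0 : ∀ t, Integrable (fun ω => g ω t) μ := fun t => by
    simpa using (EuclideanSpace.proj (𝕜 := ℝ) t).integrable_comp hgi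
  have hft : ∀ t, Integrable (fun ω => f ω t - a t) μ := fun t => by
    exact (hft0 t).sub (integrable_const _)
  have hgt : ∀ t, Integrable (fun ω => g ω t - c t) μ := fun t => by
    exact (hgt0 t).sub (integrable_const _)
  have hindep : ∀ t : Fin d, IndepFun (fun ω => f ω t - a t) (fun ω => g ω t - c t) μ := by
    intro t
    exact h.comp ((hproj t).sub measurable_const) ((hproj t).sub measurable_const)
  have hmean : ∀ t, ∫ ω, (f ω t - a t) ∂μ = 0 := by
    intro t
    rw [integral_sub (hft0 t) (integrable_const _), integral_const]
    have : ∫ ω, f ω t ∂μ = a t := by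
      have := (EuclideanSpace.proj (𝕜 := ℝ) t).integral_comp_comm hfi
      simpa using this
    simp [this]
  rw [integral_finset_sum]
  · refine Finset.sum_eq_zero fun t _ => ?_
    show integral μ ((fun ω => f ω t - a t) * fun ω => g ω t - c t) = 0
    rw [(hindep t).integral_mul_eq_mul_integral (hft t).1 (hgt t).1, hmean t, zero_mul]
  · intro t _
    exact (hindep t).integrable_mul (hft t) (hgt t)

end indep

lemma exists_good_partition {ΩB : Type*} [MeasurableSpace ΩB] (μB : Measure ΩB)
    [IsProbabilityMeasure μB] {α : Type*} [Fintype α] [DecidableEq α]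
    (B : ΩB → α) (v : α → ℝ≥0∞)
    (hB : ∀ S, μB (B ⁻¹' {S}) = v S) (hv : ∑ S, v S = 1) :
    ∃ g : α → Set ΩB, (∀ S, MeasurableSet (g S)) ∧ (Set.univ ⊆ ⋃ S, g S) ∧
      Pairwise (Function.onFun Disjoint g) ∧ (∀ S, μB (g S) = v S) ∧
      (∀ S, μB (B ⁻¹' {S} \ g S) = 0) := by
  classical
  set r : α → ℕ := fun S => (Fintype.equivFin α S : ℕ) with hr
  have hrinj : Function.Injective r := fun S T h => by
    have := Fin.val_injective h
    exact (Fintype.equivFin α).injective this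
  set h : α → Set ΩB := fun S => toMeasurable μB (B ⁻¹' {S}) with hh
  have hmeas : ∀ S, MeasurableSet (h S) := fun S => measurableSet_toMeasurable _ _
  have hsub : ∀ S, B ⁻¹' {S} ⊆ h S := fun S => subset_toMeasurable _ _
  have hμh : ∀ S, μB (h S) = v S := fun S => by
    rw [hh]; rw [measure_toMeasurable]; exact hB S
  set g : α → Set ΩB := fun S => h S \ ⋃ (T : α) (_ : r T < r S), h T with hg
  have hgsub : ∀ S, g S ⊆ h S := fun S => Set.diff_subset
  have hgmeas : ∀ S, MeasurableSet (g S) := fun S =>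
    (hmeas S).diff (MeasurableSet.iUnion fun T => MeasurableSet.iUnion fun _ => hmeas T)
  have hdisj0 : ∀ S T, r S < r T → Disjoint (g S) (g T) := by
    intro S T hlt
    rw [Set.disjoint_left]
    intro x hxS hxT
    have : x ∉ h S := by
      have := hxT.2
      simp only [Set.mem_iUnion, not_exists] at this
      exact this S hlt
    exact this (hgsub S hxS)
  have hdisj : Pairwise (Function.onFun Disjoint g) := by
    intro S T hne
    rcases lt_or_gt_of_ne (fun h => hne (hrinj h)) with h' | h'
    · exact hdisj0 S T h'
    · exact (hdisj0 T S h').symm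
  have hcover : Set.univ ⊆ ⋃ S, g S := by
    intro x _
    have hxB : x ∈ h (B x) := hsub (B x) rfl
    set F : Finset α := Finset.univ.filter (fun S => x ∈ h S) with hF
    have hFne : F.Nonempty := ⟨B x, by simp [hF, hxB]⟩
    obtain ⟨S₀, hS₀F, hS₀min⟩ := F.exists_min_image r hFne
    refine Set.mem_iUnion.mpr ⟨S₀, ?_, ?_⟩
    · exact (Finset.mem_filter.mp hS₀F).2
    · simp only [Set.mem_iUnion, not_exists]
      intro T hT hxT
      have hTF : T ∈ F := Finset.mem_filter.mpr ⟨Finset.mem_univ _, hxT⟩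
      exact absurd (hS₀min T hTF) (not_le.mpr hT)
  have hsum : ∑ S, μB (g S) = 1 := by
    have h1 : μB (⋃ S, g S) = ∑' S, μB (g S) := measure_iUnion hdisj hgmeas
    have h2 : μB (⋃ S, g S) = 1 := by
      refine le_antisymm (le_trans (measure_mono (Set.subset_univ _)) ?_) ?_
      · simp
      · calc (1:ℝ≥0∞) = μB Set.univ := (measure_univ).symm
          _ ≤ μB (⋃ S, g S) := measure_mono hcover
    rw [← h2, h1, tsum_fintype]
  have hle : ∀ S, μB (g S) ≤ v S := fun S => le_trans (measure_mono (hgsub S)) (le_of_eq (hμh S))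
  have hμg : ∀ S, μB (g S) = v S := by
    intro S₀
    refine le_antisymm (hle S₀) ?_
    have hrest : ∑ S ∈ Finset.univ.erase S₀, v S ≠ ∞ := by
      intro hcon
      have : ∑ S ∈ Finset.univ.erase S₀, v S ≤ ∑ S, v S :=
        Finset.sum_le_sum_of_subset (Finset.erase_subset _ _)
      rw [hv, hcon] at this
      simp at this
    have e1 : v S₀ + ∑ S ∈ Finset.univ.erase S₀, v S = 1 := by
      exact (Finset.add_sum_erase _ v (Finset.mem_univ S₀)).trans hv
    have e2 : μB (g S₀) + ∑ S ∈ Finset.univ.erase S₀, μB (g S) = 1 := by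
      exact (Finset.add_sum_erase _ (fun S => μB (g S)) (Finset.mem_univ S₀)).trans hsum
    have e3 : v S₀ + ∑ S ∈ Finset.univ.erase S₀, v S
        ≤ μB (g S₀) + ∑ S ∈ Finset.univ.erase S₀, v S := by
      rw [e1, ← e2]
      exact add_le_add le_rfl (Finset.sum_le_sum fun S _ => hle S)
    exact (ENNReal.add_le_add_iff_right hrest).mp e3
  refine ⟨g, hgmeas, hcover, hdisj, hμg, fun S => ?_⟩
  have hmono : μB (B ⁻¹' {S} \ g S) ≤ μB (h S \ g S) :=
    measure_mono (Set.diff_subset_diff_left (hsub S))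
  have hd : μB (h S \ g S) = 0 := by
    rw [measure_diff (hgsub S) (hgmeas S).nullMeasurableSet
      (ne_top_of_le_ne_top (by simp) (measure_mono (Set.subset_univ _))), hμh S, hμg S,
      tsub_self]
  exact le_antisymm (hd ▸ hmono) zero_le

lemma card_powersetCard_filter_supset {α : Type*} [Fintype α] [DecidableEq α]
    (T : Finset α) (b : ℕ) (hTb : T.card ≤ b) :
    ((Finset.univ.powersetCard b).filter (fun S => T ⊆ S)).card
      = (Fintype.card α - T.card).choose (b - T.card) := by
  classical
  rw [← Finset.card_univ_diff T, ← Finset.card_powersetCard (b - T.card) (Finset.univ \ T)]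
  apply Finset.card_bij (fun S _ => S \ T)
  · intro S hS
    rw [Finset.mem_filter, Finset.mem_powersetCard] at hS
    obtain ⟨⟨_, hcard⟩, hTS⟩ := hS
    rw [Finset.mem_powersetCard]
    constructor
    · exact Finset.sdiff_subset_sdiff (Finset.subset_univ _) le_rfl
    · rw [Finset.card_sdiff_of_subset hTS, hcard]
  · intro S hS S' hS' heq
    rw [Finset.mem_filter] at hS hS'
    have h1 : S = S \ T ∪ T := by
      rw [Finset.sdiff_union_self_eq_union, Finset.union_eq_left.mpr hS.2]
    have h2 : S' = S' \ T ∪ T := by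
      rw [Finset.sdiff_union_self_eq_union, Finset.union_eq_left.mpr hS'.2]
    rw [h1, h2, heq]
  · intro U hU
    rw [Finset.mem_powersetCard] at hU
    obtain ⟨hUsub, hUcard⟩ := hU
    have hdisj : Disjoint U T := by
      refine Finset.disjoint_left.mpr fun x hxU hxT => ?_
      have := hUsub hxU
      rw [Finset.mem_sdiff] at this
      exact this.2 hxT
    refine ⟨U ∪ T, ?_, ?_⟩
    · rw [Finset.mem_filter, Finset.mem_powersetCard]
      refine ⟨⟨Finset.subset_univ _, ?_⟩, Finset.subset_union_right⟩
      rw [Finset.card_union_of_disjoint hdisj, hUcard]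
      omega
    · rw [Finset.union_sdiff_self, Finset.sdiff_eq_self_of_disjoint hdisj]

lemma sum_powerset_double {n b : ℕ} (a : Fin n → Fin n → ℝ) :
    ∑ S ∈ Finset.univ.powersetCard b, ∑ i ∈ S, ∑ k ∈ S, a i k
      = ∑ i, ∑ k, (((Finset.univ.powersetCard b).filter
          (fun S => i ∈ S ∧ k ∈ S)).card : ℝ) * a i k := by
  classical
  have step1 : ∀ S : Finset (Fin n), ∑ i ∈ S, ∑ k ∈ S, a i k
      = ∑ i, ∑ k, if i ∈ S ∧ k ∈ S then a i k else 0 := by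
    intro S
    rw [show (∑ i, ∑ k, if i ∈ S ∧ k ∈ S then a i k else 0)
        = ∑ i, if i ∈ S then (∑ k, if k ∈ S then a i k else 0) else 0 by
      refine Finset.sum_congr rfl fun i _ => ?_
      by_cases hi : i ∈ S <;> simp [hi]]
    rw [Finset.sum_ite_mem, Finset.univ_inter]
    refine Finset.sum_congr rfl fun i _ => ?_
    rw [Finset.sum_ite_mem, Finset.univ_inter]
  simp_rw [step1]
  rw [Finset.sum_comm]
  refine Finset.sum_congr rfl fun i _ => ?_
  rw [Finset.sum_comm]
  refine Finset.sum_congr rfl fun k _ => ?_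
  rw [Finset.sum_ite, Finset.sum_const_zero, add_zero, Finset.sum_const, nsmul_eq_mul]

set_option maxHeartbeats 1000000 in
/-- Variance of the doubly stochastic estimator built from `m`-sample Monte
Carlo averages `x_i^m` (worst-case correlation `ρ = 1`) combined with `b`-minibatch sampling
without replacement, for `1 < b < n`. -/
theorem doubly_stochastic_variance_without_replacement_correlated
    {d n m : ℕ} (hm : 1 ≤ m) (b : ℕ) (hb1 : 1 < b) (hbn : b < n)
    {Ω ΩB : Type*} [MeasurableSpace Ω] [MeasurableSpace ΩB]
    (μ : Measure Ω) (μB : Measure ΩB) [IsProbabilityMeasure μ] [IsProbabilityMeasure μB]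
    (x : Fin n → Fin m → Ω → EuclideanSpace ℝ (Fin d))
    (hmem : ∀ i j, MemLp (x i j) 2 μ)
    (xbar : Fin n → EuclideanSpace ℝ (Fin d))
    (hmean : ∀ i j, ∫ ω, x i j ω ∂μ = xbar i)
    (σ : Fin n → ℝ) (hσ : ∀ i, 0 ≤ σ i)
    (hvar : ∀ i j, trVar μ (x i j) = σ i ^ 2)
    -- for each `i`, the replications over `j` are i.i.d.
    (hiid : ∀ i, iIndepFun (fun j : Fin m => x i j) μ)
    (hident : ∀ i, ∀ j j' : Fin m, IdentDistrib (x i j) (x i j') μ μ)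
    -- `B` is a uniformly random size-`b` subset of `{1, …, n}`, independent of the `x i j`
    (B : ΩB → Finset (Fin n))
    (hB : ∀ S : Finset (Fin n),
      μB (B ⁻¹' {S}) = if S.card = b then ((n.choose b : ℝ≥0∞))⁻¹ else 0) :
    trVar (μB.prod μ)
        (fun p : ΩB × Ω => (b : ℝ)⁻¹ • ∑ i ∈ B p.1, (m : ℝ)⁻¹ • ∑ j, x i j p.2)
      ≤ ((n : ℝ) - b) / (((n : ℝ) - 1) * m * b) * ((n : ℝ)⁻¹ * ∑ i, σ i ^ 2)
        + (n : ℝ) * ((b : ℝ) - 1) / (((n : ℝ) - 1) * m * b)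
            * ((n : ℝ)⁻¹ * ∑ i, σ i) ^ 2
        + ((n : ℝ) - b) / (((n : ℝ) - 1) * b)
            * ((n : ℝ)⁻¹ * ∑ i, ‖xbar i - (n : ℝ)⁻¹ • ∑ k, xbar k‖ ^ 2) := by
    classical
  have hb0 : 0 < b := lt_trans one_pos hb1
  have hn0 : 0 < n := lt_trans hb0 hbn
  have hbR : (0:ℝ) < b := by exact_mod_cast hb0
  have hnR : (0:ℝ) < n := by exact_mod_cast hn0
  have hmR : (0:ℝ) < m := by exact_mod_cast hm
  have hm0 : (m:ℝ) ≠ 0 := ne_of_gt hmR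
  set xb : EuclideanSpace ℝ (Fin d) := (n:ℝ)⁻¹ • ∑ k, xbar k with hxb
  set y : Fin n → Ω → EuclideanSpace ℝ (Fin d) :=
    fun i ω => (m:ℝ)⁻¹ • ∑ j, x i j ω with hy
  set w : Fin n → Ω → EuclideanSpace ℝ (Fin d) := fun i ω => y i ω - xbar i with hw
  set gg : Fin n → Ω → EuclideanSpace ℝ (Fin d) := fun i ω => y i ω - xb with hgg
  have hymem : ∀ i, MemLp (y i) 2 μ := fun i =>
    (memLp_finset_sum Finset.univ (fun j _ => hmem i j)).const_smul ((m:ℝ)⁻¹)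
  have hymean : ∀ i, ∫ ω, y i ω ∂μ = xbar i := by
    intro i
    simp only [hy]
    rw [integral_smul, integral_finset_sum _ (fun j _ => (hmem i j).integrable one_le_two)]
    simp_rw [hmean]
    rw [Finset.sum_const, Finset.card_univ, Fintype.card_fin,
      ← Nat.cast_smul_eq_nsmul ℝ, smul_smul, inv_mul_cancel₀ hm0, one_smul]
  have hwmem : ∀ i, MemLp (w i) 2 μ := fun i => (hymem i).sub (memLp_const _)
  have hggmem : ∀ i, MemLp (gg i) 2 μ := fun i => (hymem i).sub (memLp_const _)
  have hwint : ∀ i, Integrable (w i) μ := fun i => (hwmem i).integrable one_le_two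
  have hwmean : ∀ i, ∫ ω, w i ω ∂μ = 0 := by
    intro i
    rw [hw]
    rw [integral_sub ((hymem i).integrable one_le_two) (integrable_const _), hymean i,
      integral_const]
    simp
  have hwvar : ∀ i, ∫ ω, ‖w i ω‖ ^ 2 ∂μ = σ i ^ 2 / m := by
    intro i
    have hwrep : ∀ ω, w i ω = (m:ℝ)⁻¹ • ∑ j, (x i j ω - xbar i) := by
      intro ω
      simp only [hw, hy, Finset.sum_sub_distrib, smul_sub, Finset.sum_const,
        Finset.card_univ, Fintype.card_fin]
      rw [← Nat.cast_smul_eq_nsmul ℝ, smul_smul, inv_mul_cancel₀ hm0, one_smul]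
    have hzmem : ∀ j : Fin m, MemLp (fun ω => x i j ω - xbar i) 2 μ :=
      fun j => (hmem i j).sub (memLp_const _)
    have hcov : ∀ j j' : Fin m, ∫ ω, @inner ℝ _ _ (x i j ω - xbar i) (x i j' ω - xbar i) ∂μ
        = if j = j' then σ i ^ 2 else 0 := by
      intro j j'
      by_cases hjj : j = j'
      · subst hjj
        rw [if_pos rfl]
        have hsq : ∀ ω, @inner ℝ _ _ (x i j ω - xbar i) (x i j ω - xbar i)
            = ‖x i j ω - xbar i‖ ^ 2 := fun ω => real_inner_self_eq_norm_sq _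
        simp_rw [hsq]
        rw [show (∫ ω, ‖x i j ω - xbar i‖ ^ 2 ∂μ) = trVar μ (x i j) by
          unfold trVar; rw [hmean i j]]
        exact hvar i j
      · rw [if_neg hjj]
        have hind : IndepFun (x i j) (x i j') μ := (hiid i).indepFun hjj
        have hz := indep_cov_zero hind (hmem i j) (hmem i j')
        rw [hmean i j, hmean i j'] at hz
        exact hz
    simp_rw [hwrep]
    have hnorm : ∀ ω, ‖(m:ℝ)⁻¹ • ∑ j, (x i j ω - xbar i)‖ ^ 2
        = ((m:ℝ)⁻¹) ^ 2 * ‖∑ j, (x i j ω - xbar i)‖ ^ 2 := by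
      intro ω
      rw [norm_smul, mul_pow]
      congr 1
      rw [Real.norm_eq_abs, abs_of_nonneg (inv_nonneg.mpr (le_of_lt hmR))]
    simp_rw [hnorm]
    rw [integral_const_mul, integral_norm_sq_sum Finset.univ _ (fun j _ => hzmem j)]
    simp_rw [hcov]
    rw [show (∑ j : Fin m, ∑ j' : Fin m, if j = j' then σ i ^ 2 else 0) = m * σ i ^ 2 by
      simp [Finset.sum_ite_eq, Finset.card_univ]]
    field_simp
  -- covariance facts
  have hTdecomp : ∀ i k, ∫ ω, @inner ℝ _ _ (gg i ω) (gg k ω) ∂μ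
      = (∫ ω, @inner ℝ _ _ (w i ω) (w k ω) ∂μ) + @inner ℝ _ _ (xbar i - xb) (xbar k - xb) := by
    intro i k
    have hrep : ∀ ω, @inner ℝ _ _ (gg i ω) (gg k ω)
        = @inner ℝ _ _ (w i ω) (w k ω) + @inner ℝ _ _ (w i ω) (xbar k - xb)
          + (@inner ℝ _ _ (xbar i - xb) (w k ω) + @inner ℝ _ _ (xbar i - xb) (xbar k - xb)) := by
      intro ω
      have h1 : gg i ω = w i ω + (xbar i - xb) := by simp only [hgg, hw]; abel
      have h2 : gg k ω = w k ω + (xbar k - xb) := by simp only [hgg, hw]; abel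
      rw [h1, h2, inner_add_left, inner_add_right, inner_add_right]
      try ring
    simp_rw [hrep]
    have i1 : Integrable (fun ω => @inner ℝ _ _ (w i ω) (w k ω)) μ :=
      memLp_inner_int (hwmem i) (hwmem k)
    have i2 : Integrable (fun ω => @inner ℝ _ _ (w i ω) (xbar k - xb)) μ :=
      (hwint i).inner_const _
    have i3 : Integrable (fun ω => @inner ℝ _ _ (xbar i - xb) (w k ω)) μ :=
      (hwint k).const_inner _
    have hz1 : ∫ ω, @inner ℝ _ _ (w i ω) (xbar k - xb) ∂μ = 0 := by
      have hc : ∀ ω, @inner ℝ _ _ (w i ω) (xbar k - xb)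
          = @inner ℝ _ _ (xbar k - xb) (w i ω) := fun ω => real_inner_comm _ _
      simp_rw [hc]
      rw [integral_inner (hwint i), hwmean i, inner_zero_right]
    have hz2 : ∫ ω, @inner ℝ _ _ (xbar i - xb) (w k ω) ∂μ = 0 := by
      rw [integral_inner (hwint k), hwmean k, inner_zero_right]
    have ia1 : Integrable (fun ω => @inner ℝ _ _ (w i ω) (w k ω)
        + @inner ℝ _ _ (w i ω) (xbar k - xb)) μ := by exact i1.add i2
    have ia2 : Integrable (fun ω => @inner ℝ _ _ (xbar i - xb) (w k ω)
        + @inner ℝ _ _ (xbar i - xb) (xbar k - xb)) μ := by exact i3.add (integrable_const _)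
    rw [integral_add ia1 ia2, integral_add i1 i2,
      integral_add i3 (integrable_const _), integral_const, hz1, hz2]
    simp
  have hTii : ∀ i, ∫ ω, @inner ℝ _ _ (gg i ω) (gg i ω) ∂μ
      = σ i ^ 2 / m + ‖xbar i - xb‖ ^ 2 := by
    intro i
    have h1 : ∫ ω, @inner ℝ _ _ (w i ω) (w i ω) ∂μ = σ i ^ 2 / m := by
      simp_rw [real_inner_self_eq_norm_sq]
      exact hwvar i
    rw [hTdecomp i i, h1, real_inner_self_eq_norm_sq]
  have hTle : ∀ i k, ∫ ω, @inner ℝ _ _ (gg i ω) (gg k ω) ∂μ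
      ≤ σ i * σ k / m + @inner ℝ _ _ (xbar i - xb) (xbar k - xb) := by
    intro i k
    rw [hTdecomp i k]
    have hcs : ∫ ω, @inner ℝ _ _ (w i ω) (w k ω) ∂μ ≤ σ i * σ k / m := by
      refine le_trans (integral_inner_le_sqrt (hwmem i) (hwmem k)) ?_
      rw [hwvar i, hwvar k, ← Real.sqrt_mul (by positivity),
        show σ i ^ 2 / m * (σ k ^ 2 / m) = (σ i * σ k / m) ^ 2 by ring,
        Real.sqrt_sq (div_nonneg (mul_nonneg (hσ i) (hσ k)) hmR.le)]
    linarith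
  -- partition of ΩB
  set vals : Finset (Fin n) → ℝ≥0∞ :=
    fun S => if S.card = b then ((n.choose b : ℝ≥0∞))⁻¹ else 0 with hvals
  have hC0 : 0 < n.choose b := Nat.choose_pos (le_of_lt hbn)
  have hCR : (0:ℝ) < (n.choose b : ℝ) := by exact_mod_cast hC0
  have hPfilter : (Finset.univ : Finset (Fin n)).powersetCard b
      = Finset.univ.filter (fun S : Finset (Fin n) => S.card = b) := by
    rw [Finset.powersetCard_eq_filter, Finset.powerset_univ]
  have hvalsum : ∑ S, vals S = 1 := by
    simp only [hvals]
    rw [Finset.sum_ite, Finset.sum_const_zero, add_zero, Finset.sum_const, ← hPfilter,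
      Finset.card_powersetCard, Finset.card_univ, Fintype.card_fin, nsmul_eq_mul,
      ENNReal.mul_inv_cancel (Nat.cast_ne_zero.mpr (ne_of_gt hC0)) (ENNReal.natCast_ne_top _)]
  obtain ⟨gs, hgsmeas, hgscover, hgsdisj, hgsμ, hgsnull⟩ :=
    exists_good_partition μB B vals hB hvalsum
  set val : Finset (Fin n) → Ω → EuclideanSpace ℝ (Fin d) :=
    fun S ω => (b:ℝ)⁻¹ • ∑ i ∈ S, y i ω with hval
  set Z₀ : ΩB × Ω → EuclideanSpace ℝ (Fin d) :=
    fun p => ∑ S, Set.indicator (gs S) (fun _ => (1:ℝ)) p.1 • val S p.2 with hZ₀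
  have huniq : ∀ ωB : ΩB, ∃ S₀, ωB ∈ gs S₀ ∧ ∀ T, T ≠ S₀ → ωB ∉ gs T := by
    intro ωB
    obtain ⟨S₀, hS₀⟩ := Set.mem_iUnion.mp (hgscover (Set.mem_univ ωB))
    exact ⟨S₀, hS₀, fun T hT hmem' => Set.disjoint_left.mp (hgsdisj hT) hmem' hS₀⟩
  have hZcollapse : ∀ p : ΩB × Ω, ∀ S₀, p.1 ∈ gs S₀ → Z₀ p = val S₀ p.2 := by
    intro p S₀ hp
    have hrfl : Z₀ p = ∑ S, Set.indicator (gs S) (fun _ => (1:ℝ)) p.1 • val S p.2 := rfl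
    rw [hrfl, Finset.sum_eq_single S₀]
    · rw [Set.indicator_of_mem hp, one_smul]
    · intro T _ hT
      have : p.1 ∉ gs T := fun hmem' => Set.disjoint_left.mp (hgsdisj hT) hmem' hp
      rw [Set.indicator_of_notMem this, zero_smul]
    · intro h
      exact absurd (Finset.mem_univ S₀) h
  have hZae : (fun p : ΩB × Ω => (b : ℝ)⁻¹ • ∑ i ∈ B p.1, (m : ℝ)⁻¹ • ∑ j, x i j p.2)
      =ᵐ[μB.prod μ] Z₀ := by
    set N : Set ΩB := ⋃ S, (B ⁻¹' {S} \ gs S) with hN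
    have hNnull : μB N = 0 := measure_iUnion_null fun S => hgsnull S
    have hNprod : (μB.prod μ) (Prod.fst ⁻¹' N) = 0 :=
      Measure.quasiMeasurePreserving_fst.preimage_null hNnull
    refine Filter.eventuallyEq_iff_exists_mem.mpr ⟨(Prod.fst ⁻¹' N)ᶜ, ?_, ?_⟩
    · rw [MeasureTheory.mem_ae_iff, compl_compl]
      exact hNprod
    · intro p hpN
      have hp1 : p.1 ∈ gs (B p.1) := by
        by_contra hmem'
        exact hpN (Set.mem_iUnion.mpr ⟨B p.1, ⟨rfl, hmem'⟩⟩)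
      rw [hZcollapse p (B p.1) hp1]
  have mpsnd : MeasurePreserving (Prod.snd) (μB.prod μ) μ := by
    refine ⟨measurable_snd, ?_⟩
    rw [Measure.map_snd_prod]
    simp
  have hvalmem : ∀ S, MemLp (val S) 2 μ := fun S =>
    (memLp_finset_sum S (fun i _ => hymem i)).const_smul ((b:ℝ)⁻¹)
  have hZ₀mem : MemLp Z₀ 2 (μB.prod μ) := by
    refine memLp_finset_sum _ (fun S _ => ?_)
    have h1 : MemLp (fun p : ΩB × Ω => val S p.2) 2 (μB.prod μ) :=
      (hvalmem S).comp_measurePreserving mpsnd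
    have h2 : MemLp (fun p : ΩB × Ω => Set.indicator (gs S) (fun _ => (1:ℝ)) p.1) ∞
        (μB.prod μ) := by
      refine memLp_top_of_bound ?_ 1 (Filter.Eventually.of_forall fun p => ?_)
      · exact ((measurable_const.indicator (hgsmeas S)).comp measurable_fst).aestronglyMeasurable
      · by_cases hmem' : p.1 ∈ gs S <;>
          simp [Set.indicator_of_mem, Set.indicator_of_notMem, hmem']
    exact h1.smul (p := ∞) (q := 2) (r := 2) h2
  have hFint : ∀ S : Finset (Fin n), Integrable (fun ω => ‖val S ω - xb‖ ^ 2) μ := by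
    intro S
    have h := (hvalmem S).sub (memLp_const xb)
    exact (memLp_two_iff_integrable_sq_norm h.1).mp h
  have hint2 : ∫ p, ‖Z₀ p - xb‖ ^ 2 ∂(μB.prod μ)
      = ∑ S, (vals S).toReal * ∫ ω, ‖val S ω - xb‖ ^ 2 ∂μ := by
    have hpt : ∀ p : ΩB × Ω, ‖Z₀ p - xb‖ ^ 2
        = ∑ S, Set.indicator (gs S) (fun _ => (1:ℝ)) p.1 * ‖val S p.2 - xb‖ ^ 2 := by
      intro p
      obtain ⟨S₀, hS₀, hunq⟩ := huniq p.1
      rw [hZcollapse p S₀ hS₀, Finset.sum_eq_single S₀]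
      · rw [Set.indicator_of_mem hS₀, one_mul]
      · intro T _ hT
        rw [Set.indicator_of_notMem (hunq T hT), zero_mul]
      · intro h
        exact absurd (Finset.mem_univ S₀) h
    simp_rw [hpt]
    have hintS : ∀ S : Finset (Fin n), Integrable (fun p : ΩB × Ω =>
        Set.indicator (gs S) (fun _ => (1:ℝ)) p.1 * ‖val S p.2 - xb‖ ^ 2) (μB.prod μ) :=
      fun S => Integrable.mul_prod ((integrable_const (1:ℝ)).indicator (hgsmeas S)) (hFint S)
    rw [integral_finset_sum _ (fun S _ => hintS S)]
    refine Finset.sum_congr rfl fun S _ => ?_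
    rw [integral_prod_mul (L := ℝ) (fun ωB => Set.indicator (gs S) (fun _ => (1:ℝ)) ωB)
      (fun ω => ‖val S ω - xb‖ ^ 2)]
    rw [integral_indicator_const (1:ℝ) (hgsmeas S), measureReal_def, hgsμ S, smul_eq_mul, mul_one]
  have hsum2 : ∑ S, (vals S).toReal * ∫ ω, ‖val S ω - xb‖ ^ 2 ∂μ
      = (n.choose b : ℝ)⁻¹ * ∑ S ∈ Finset.univ.powersetCard b,
          ∫ ω, ‖val S ω - xb‖ ^ 2 ∂μ := by
    have hvr : ∀ S : Finset (Fin n), (vals S).toReal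
        = if S.card = b then ((n.choose b : ℝ))⁻¹ else 0 := by
      intro S
      simp only [hvals]
      split
      · simp [ENNReal.toReal_inv]
      · simp
    simp_rw [hvr, ite_mul, zero_mul, Finset.mul_sum, hPfilter, Finset.sum_filter]
  have hI : ∀ S ∈ (Finset.univ : Finset (Fin n)).powersetCard b,
      ∫ ω, ‖val S ω - xb‖ ^ 2 ∂μ
        = ((b:ℝ)⁻¹) ^ 2 * ∑ i ∈ S, ∑ k ∈ S, ∫ ω, @inner ℝ _ _ (gg i ω) (gg k ω) ∂μ := by
    intro S hS
    have hcard : S.card = b := (Finset.mem_powersetCard.mp hS).2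
    have hrep : ∀ ω, val S ω - xb = (b:ℝ)⁻¹ • ∑ i ∈ S, gg i ω := by
      intro ω
      simp only [hval, hgg, Finset.sum_sub_distrib, smul_sub, Finset.sum_const, hcard]
      rw [← Nat.cast_smul_eq_nsmul ℝ, smul_smul, inv_mul_cancel₀ (ne_of_gt hbR), one_smul]
    simp_rw [hrep]
    have hnorm : ∀ ω, ‖(b:ℝ)⁻¹ • ∑ i ∈ S, gg i ω‖ ^ 2
        = ((b:ℝ)⁻¹) ^ 2 * ‖∑ i ∈ S, gg i ω‖ ^ 2 := by
      intro ω
      rw [norm_smul, mul_pow]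
      congr 1
      rw [Real.norm_eq_abs, abs_of_nonneg (inv_nonneg.mpr (le_of_lt hbR))]
    simp_rw [hnorm]
    rw [integral_const_mul, integral_norm_sq_sum S _ (fun i _ => hggmem i)]
  -- counting
  have hcnt_diag : ∀ i : Fin n, (((Finset.univ.powersetCard b).filter
      (fun S => i ∈ S ∧ i ∈ S)).card : ℝ) = ((n-1).choose (b-1) : ℕ) := by
    intro i
    have he : (Finset.univ.powersetCard b).filter (fun S : Finset (Fin n) => i ∈ S ∧ i ∈ S)
        = (Finset.univ.powersetCard b).filter (fun S => {i} ⊆ S) := by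
      refine Finset.filter_congr fun S _ => ?_
      simp [Finset.singleton_subset_iff]
    rw [he, card_powersetCard_filter_supset {i} b (by simp; omega)]
    simp [Fintype.card_fin]
  have hcnt_off : ∀ i k : Fin n, i ≠ k → (((Finset.univ.powersetCard b).filter
      (fun S => i ∈ S ∧ k ∈ S)).card : ℝ) = ((n-2).choose (b-2) : ℕ) := by
    intro i k hik
    have he : (Finset.univ.powersetCard b).filter (fun S : Finset (Fin n) => i ∈ S ∧ k ∈ S)
        = (Finset.univ.powersetCard b).filter (fun S => ({i, k} : Finset (Fin n)) ⊆ S) := by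
      refine Finset.filter_congr fun S _ => ?_
      simp [Finset.insert_subset_iff]
    have hcard2 : ({i, k} : Finset (Fin n)).card = 2 := by
      rw [Finset.card_insert_of_notMem (by simp [hik]), Finset.card_singleton]
    rw [he, card_powersetCard_filter_supset ({i, k} : Finset (Fin n)) b (by rw [hcard2]; omega)]
    rw [hcard2]
    simp [Fintype.card_fin]
    -- abbreviations and identities
  set A : ℝ := ∑ i, σ i ^ 2 with hA
  set S1 : ℝ := ∑ i, σ i with hS1
  set Cs : ℝ := ∑ i, ‖xbar i - xb‖ ^ 2 with hCsdef
  set C1 : ℝ := (((n-1).choose (b-1) : ℕ) : ℝ) with hC1def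
  set C2 : ℝ := (((n-2).choose (b-2) : ℕ) : ℝ) with hC2def
  set CC : ℝ := ((n.choose b : ℕ) : ℝ) with hCCdef
  have hsumc : ∑ i, (xbar i - xb) = 0 := by
    rw [Finset.sum_sub_distrib, Finset.sum_const, Finset.card_univ, Fintype.card_fin, hxb,
      ← Nat.cast_smul_eq_nsmul ℝ, smul_smul, mul_inv_cancel₀ (ne_of_gt hnR), one_smul, sub_self]
  have hoffc : ∑ i, ∑ k ∈ Finset.univ.erase i,
      @inner ℝ _ _ (xbar i - xb) (xbar k - xb) = -Cs := by
    have hrow : ∀ i : Fin n, ∑ k ∈ Finset.univ.erase i,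
        @inner ℝ _ _ (xbar i - xb) (xbar k - xb)
        = (∑ k, @inner ℝ _ _ (xbar i - xb) (xbar k - xb)) - ‖xbar i - xb‖ ^ 2 := by
      intro i
      rw [← Finset.add_sum_erase _ _ (Finset.mem_univ i), real_inner_self_eq_norm_sq]
      ring
    simp_rw [hrow]
    rw [Finset.sum_sub_distrib]
    have hfull : ∀ i : Fin n, ∑ k, @inner ℝ _ _ (xbar i - xb) (xbar k - xb) = 0 := by
      intro i
      rw [← inner_sum, hsumc, inner_zero_right]
    simp_rw [hfull]
    rw [Finset.sum_const_zero]
    simp [hCsdef]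
  have hoffs : ∑ i, ∑ k ∈ Finset.univ.erase i, σ i * σ k = S1 ^ 2 - A := by
    have hrow : ∀ i : Fin n, ∑ k ∈ Finset.univ.erase i, σ i * σ k
        = (∑ k, σ i * σ k) - σ i ^ 2 := by
      intro i
      rw [← Finset.add_sum_erase _ _ (Finset.mem_univ i)]
      ring
    simp_rw [hrow]
    rw [Finset.sum_sub_distrib]
    have hfull : ∑ i : Fin n, ∑ k, σ i * σ k = S1 ^ 2 := by
      rw [← Finset.sum_mul_sum, hS1]
      ring
    rw [hfull, hA]
  -- the central bound
  have key : ∑ i, ∑ k, (((Finset.univ.powersetCard b).filter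
        (fun S => i ∈ S ∧ k ∈ S)).card : ℝ)
        * ∫ ω, @inner ℝ _ _ (gg i ω) (gg k ω) ∂μ
      ≤ C1 * (A / m + Cs) + C2 * ((S1 ^ 2 - A) / m - Cs) := by
    have hC2nn : (0:ℝ) ≤ C2 := by rw [hC2def]; positivity
    have hrow : ∀ i : Fin n, ∑ k, (((Finset.univ.powersetCard b).filter
          (fun S => i ∈ S ∧ k ∈ S)).card : ℝ) * ∫ ω, @inner ℝ _ _ (gg i ω) (gg k ω) ∂μ
        ≤ C1 * (σ i ^ 2 / m + ‖xbar i - xb‖ ^ 2)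
          + ∑ k ∈ Finset.univ.erase i,
              C2 * (σ i * σ k / m + @inner ℝ _ _ (xbar i - xb) (xbar k - xb)) := by
      intro i
      rw [← Finset.add_sum_erase _ _ (Finset.mem_univ i)]
      refine add_le_add ?_ (Finset.sum_le_sum fun k hk => ?_)
      · rw [hcnt_diag i, hTii i]
      · have hki : i ≠ k := fun h => (Finset.mem_erase.mp hk).1 h.symm
        rw [hcnt_off i k hki]
        exact mul_le_mul_of_nonneg_left (hTle i k) hC2nn
    refine le_trans (Finset.sum_le_sum fun i _ => hrow i) (le_of_eq ?_)
    rw [Finset.sum_add_distrib]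
    congr 1
    · rw [← Finset.mul_sum]
      congr 1
      rw [Finset.sum_add_distrib, ← Finset.sum_div]
    · have : ∀ i : Fin n, ∑ k ∈ Finset.univ.erase i,
          C2 * (σ i * σ k / m + @inner ℝ _ _ (xbar i - xb) (xbar k - xb))
          = C2 * ∑ k ∈ Finset.univ.erase i,
              (σ i * σ k / m + @inner ℝ _ _ (xbar i - xb) (xbar k - xb)) := by
        intro i
        rw [Finset.mul_sum]
      simp_rw [this]
      rw [← Finset.mul_sum]
      congr 1
      have hsplit : ∑ i, ∑ k ∈ Finset.univ.erase i,
          (σ i * σ k / ↑m + @inner ℝ _ _ (xbar i - xb) (xbar k - xb))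
          = (∑ i, ∑ k ∈ Finset.univ.erase i, σ i * σ k) / ↑m
            + ∑ i, ∑ k ∈ Finset.univ.erase i,
                @inner ℝ _ _ (xbar i - xb) (xbar k - xb) := by
        rw [Finset.sum_div, ← Finset.sum_add_distrib]
        refine Finset.sum_congr rfl fun i _ => ?_
        rw [Finset.sum_div, ← Finset.sum_add_distrib]
      rw [hsplit, hoffs, hoffc]
      ring
    -- choose identities
  have hnat1 : n * (n-1).choose (b-1) = n.choose b * b := by
    have h1 : n - 1 + 1 = n := by omega
    have h2 : b - 1 + 1 = b := by omega
    have h := Nat.add_one_mul_choose_eq (n-1) (b-1)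
    rw [h1, h2] at h
    exact h
  have hnat2 : (n-1) * (n-2).choose (b-2) = (n-1).choose (b-1) * (b-1) := by
    have h1 : n - 2 + 1 = n - 1 := by omega
    have h2 : b - 2 + 1 = b - 1 := by omega
    have h := Nat.add_one_mul_choose_eq (n-2) (b-2)
    rw [h1, h2] at h
    exact h
  have hcastn1 : ((n-1 : ℕ) : ℝ) = (n:ℝ) - 1 := by
    rw [Nat.cast_sub (by omega : 1 ≤ n), Nat.cast_one]
  have hcastb1 : ((b-1 : ℕ) : ℝ) = (b:ℝ) - 1 := by
    rw [Nat.cast_sub (by omega : 1 ≤ b), Nat.cast_one]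
  have hr1 : (n:ℝ) * C1 = CC * b := by
    rw [hC1def, hCCdef]
    exact_mod_cast congrArg (Nat.cast (R := ℝ)) hnat1
  have hr2 : ((n:ℝ) - 1) * C2 = C1 * ((b:ℝ) - 1) := by
    rw [hC1def, hC2def, ← hcastn1, ← hcastb1]
    exact_mod_cast congrArg (Nat.cast (R := ℝ)) hnat2
  have hfinal : CC⁻¹ * (((b:ℝ)⁻¹) ^ 2 * (C1 * (A / m + Cs) + C2 * ((S1 ^ 2 - A) / m - Cs)))
      = ((n : ℝ) - b) / (((n : ℝ) - 1) * m * b) * ((n : ℝ)⁻¹ * A)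
        + (n : ℝ) * ((b : ℝ) - 1) / (((n : ℝ) - 1) * m * b) * ((n : ℝ)⁻¹ * S1) ^ 2
        + ((n : ℝ) - b) / (((n : ℝ) - 1) * b) * ((n : ℝ)⁻¹ * Cs) := by
    have hn1 : (1:ℝ) < n := by exact_mod_cast (show 1 < n by omega)
    have hn1' : (n:ℝ) - 1 ≠ 0 := by linarith
    have hCC0 : CC ≠ 0 := ne_of_gt hCR
    have hn0' : (n:ℝ) ≠ 0 := ne_of_gt hnR
    have hb0' : (b:ℝ) ≠ 0 := ne_of_gt hbR
    have e1 : C1 = CC * b / n := by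
      field_simp
      linarith [hr1]
    have e2 : C2 = CC * b * ((b:ℝ) - 1) / (n * ((n:ℝ) - 1)) := by
      rw [e1] at hr2
      field_simp at hr2 ⊢
      linarith [hr2]
    rw [e1, e2]
    field_simp
    ring
  calc trVar (μB.prod μ)
        (fun p : ΩB × Ω => (b : ℝ)⁻¹ • ∑ i ∈ B p.1, (m : ℝ)⁻¹ • ∑ j, x i j p.2)
      = trVar (μB.prod μ) Z₀ := trVar_congr hZae
    _ ≤ ∫ p, ‖Z₀ p - xb‖ ^ 2 ∂(μB.prod μ) := trVar_le_moment hZ₀mem xb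
    _ = ∑ S, (vals S).toReal * ∫ ω, ‖val S ω - xb‖ ^ 2 ∂μ := hint2
    _ = CC⁻¹ * ∑ S ∈ Finset.univ.powersetCard b, ∫ ω, ‖val S ω - xb‖ ^ 2 ∂μ := hsum2
    _ = CC⁻¹ * (((b:ℝ)⁻¹) ^ 2 * ∑ S ∈ Finset.univ.powersetCard b,
          ∑ i ∈ S, ∑ k ∈ S, ∫ ω, @inner ℝ _ _ (gg i ω) (gg k ω) ∂μ) := by
        rw [Finset.sum_congr rfl hI, ← Finset.mul_sum]
    _ = CC⁻¹ * (((b:ℝ)⁻¹) ^ 2 * ∑ i, ∑ k, (((Finset.univ.powersetCard b).filter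
          (fun S => i ∈ S ∧ k ∈ S)).card : ℝ)
            * ∫ ω, @inner ℝ _ _ (gg i ω) (gg k ω) ∂μ) := by
        rw [sum_powerset_double]
    _ ≤ CC⁻¹ * (((b:ℝ)⁻¹) ^ 2 * (C1 * (A / m + Cs) + C2 * ((S1 ^ 2 - A) / m - Cs))) := by
        refine mul_le_mul_of_nonneg_left
          (mul_le_mul_of_nonneg_left key (by positivity)) (inv_nonneg.mpr hCR.le)
    _ = _ := hfinal
end

section
/- Let F = (1/n)(f_1 + … + f_n) on X ⊆ ℝ^d, where each f_i is convex, differentiable, and L_i-smooth in the sense ‖∇f_i(x) − ∇f_i(y)‖₂² ≤ 2L_i D_{f_i}(x, y) for all x, y ∈ X, and suppose every minimizer x* of F over X is a stationary point of F. Let B be a uniformly random size-b subset of {1,…,n} drawn without replacement (1 ≤ b ≤ n, n ≥ 2), and ∇f_B(x) = (1/b)Σ_{i∈B}∇f_i(x). Then tr 𝕍[∇f_B(x) − ∇f_B(x*)] ≤ 2·((n−b)/(b(n−1)))·L_max·(F(x) − F(x*)) for all x ∈ X, where L_max = max{L_1,…,L_n}. -/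
open MeasureTheory ProbabilityTheory
open scoped ENNReal

open Finset
open scoped RealInnerProductSpace

lemma count_containing {n : ℕ} (t : Finset (Fin n)) (b : ℕ) (hb : t.card ≤ b) :
    ((Finset.powersetCard b (Finset.univ : Finset (Fin n))).filter (fun s => t ⊆ s)).card
      = (n - t.card).choose (b - t.card) := by
  have hcard : (Finset.univ \ t : Finset (Fin n)).card = n - t.card := by
    simp [Finset.card_sdiff_of_subset (Finset.subset_univ t)]
  rw [← hcard, ← Finset.card_powersetCard]
  apply Finset.card_bij (fun s _ => s \ t)
  · intro s hs
    simp only [Finset.mem_filter, Finset.mem_powersetCard] at hs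
    refine Finset.mem_powersetCard.2 ⟨?_, ?_⟩
    · exact Finset.sdiff_subset_sdiff (Finset.subset_univ s) le_rfl
    · rw [Finset.card_sdiff_of_subset hs.2, hs.1.2]
  · intro s₁ h₁ s₂ h₂ he
    simp only [Finset.mem_filter, Finset.mem_powersetCard] at h₁ h₂
    have := congrArg (· ∪ t) he
    simpa [Finset.sdiff_union_of_subset h₁.2, Finset.sdiff_union_of_subset h₂.2] using this
  · intro u hu
    simp only [Finset.mem_powersetCard] at hu
    have hdisj : Disjoint u t := by
      rw [Finset.disjoint_left]
      intro a hau hat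
      exact (Finset.mem_sdiff.1 (hu.1 hau)).2 hat
    refine ⟨u ∪ t, ?_, ?_⟩
    · simp only [Finset.mem_filter, Finset.mem_powersetCard]
      refine ⟨⟨Finset.subset_univ _, ?_⟩, Finset.subset_union_right⟩
      rw [Finset.card_union_of_disjoint hdisj, hu.2]
      omega
    · rw [Finset.union_sdiff_right, Finset.sdiff_eq_self_of_disjoint hdisj]


-- single-element count
lemma count_single {n : ℕ} (i : Fin n) (b : ℕ) (hb : 1 ≤ b) :
    ((Finset.powersetCard b (Finset.univ : Finset (Fin n))).filter (fun s => i ∈ s)).card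
      = (n - 1).choose (b - 1) := by
  have := count_containing {i} b (by simpa using hb)
  simpa using this

lemma count_pair {n : ℕ} (i j : Fin n) (hij : i ≠ j) (b : ℕ) (hb : 2 ≤ b) :
    ((Finset.powersetCard b (Finset.univ : Finset (Fin n))).filter (fun s => i ∈ s ∧ j ∈ s)).card
      = (n - 2).choose (b - 2) := by
  have h2 : ({i, j} : Finset (Fin n)).card = 2 := by
    rw [Finset.card_insert_of_notMem (by simpa using hij), Finset.card_singleton]
  have := count_containing {i, j} b (by rw [h2]; exact hb)
  rw [h2] at this
  rw [← this]
  congr 1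
  ext s
  simp [Finset.insert_subset_iff]

lemma count_pair_one {n : ℕ} (i j : Fin n) (hij : i ≠ j) :
    ((Finset.powersetCard 1 (Finset.univ : Finset (Fin n))).filter (fun s => i ∈ s ∧ j ∈ s)).card
      = 0 := by
  rw [Finset.card_eq_zero, Finset.filter_eq_empty_iff]
  rintro s hs ⟨his, hjs⟩
  have hc := (Finset.mem_powersetCard.1 hs).2
  have : ({i, j} : Finset (Fin n)) ⊆ s := by
    rw [Finset.insert_subset_iff]; exact ⟨his, Finset.singleton_subset_iff.2 hjs⟩
  have := Finset.card_le_card this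
  rw [Finset.card_insert_of_notMem (by simpa using hij), Finset.card_singleton, hc] at this
  omega

variable {E : Type*} [NormedAddCommGroup E] [InnerProductSpace ℝ E]

/-- sum over subsets of a per-element sum -/
lemma sum_powerset_sum {n b : ℕ} (hb : 1 ≤ b) (g : Fin n → E) :
    ∑ s ∈ Finset.powersetCard b (Finset.univ : Finset (Fin n)), ∑ i ∈ s, g i
      = ((n-1).choose (b-1)) • ∑ i, g i := by
  have : ∀ s ∈ Finset.powersetCard b (Finset.univ : Finset (Fin n)),
      ∑ i ∈ s, g i = ∑ i, if i ∈ s then g i else 0 := by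
    intro s _
    rw [Finset.sum_ite_mem, Finset.univ_inter]
  rw [Finset.sum_congr rfl this, Finset.sum_comm]
  rw [Finset.smul_sum]
  refine Finset.sum_congr rfl fun i _ => ?_
  rw [← Finset.sum_filter, Finset.sum_const, count_single i b hb]

lemma choose_id1 {n b : ℕ} (hn : 1 ≤ n) (hb : 1 ≤ b) :
    n * (n-1).choose (b-1) = n.choose b * b := by
  have h1 : n - 1 + 1 = n := by omega
  have h2 : b - 1 + 1 = b := by omega
  have := Nat.add_one_mul_choose_eq (n-1) (b-1)
  simp only [Nat.succ_eq_add_one, h1, h2] at this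
  exact this

lemma coeff_eq {n b : ℕ} (hn : 2 ≤ n) (hb1 : 1 ≤ b) (hbn : b ≤ n) :
    (((n-1).choose (b-1) : ℝ) - ((if b = 1 then 0 else (n-2).choose (b-2) : ℕ) : ℝ))
      = (n.choose b : ℝ) * b * ((n:ℝ) - b) / ((n:ℝ) * ((n:ℝ) - 1)) := by
  have hn0 : (n:ℝ) ≠ 0 := by positivity
  have hn1 : (n:ℝ) - 1 ≠ 0 := by
    have : (2:ℝ) ≤ n := by exact_mod_cast hn
    linarith
  have id1 : (n:ℝ) * ((n-1).choose (b-1) : ℝ) = (n.choose b : ℝ) * b := by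
    exact_mod_cast choose_id1 (by omega) hb1
  rcases eq_or_lt_of_le hb1 with hb | hb
  · subst hb
    simp only [if_pos rfl]
    rw [Nat.choose_one_right] at *
    simp only [Nat.sub_self, Nat.choose_zero_right] at *
    push_cast
    field_simp
    norm_num
  · have hb2 : 2 ≤ b := hb
    rw [if_neg (by omega)]
    have id2 : ((n:ℝ) - 1) * ((n-2).choose (b-2) : ℝ)
        = ((n-1).choose (b-1) : ℝ) * ((b:ℝ) - 1) := by
      have hnat : (n-1) * (n-2).choose (b-2) = (n-1).choose (b-1) * (b-1) := by
        have := choose_id1 (n := n-1) (b := b-1) (by omega) (by omega)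
        have e1 : n - 1 - 1 = n - 2 := by omega
        have e2 : b - 1 - 1 = b - 2 := by omega
        rw [e1, e2] at this
        exact this
      have c1 : ((n-1 : ℕ) : ℝ) = (n:ℝ) - 1 := by
        have : (1:ℕ) ≤ n := by omega
        push_cast [Nat.cast_sub this]; ring
      have c2 : ((b-1 : ℕ) : ℝ) = (b:ℝ) - 1 := by
        push_cast [Nat.cast_sub hb1]; ring
      calc ((n:ℝ) - 1) * ((n-2).choose (b-2) : ℝ)
          = ((n-1:ℕ) * (n-2).choose (b-2) : ℕ) := by rw [← c1]; push_cast; ring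
        _ = ((n-1).choose (b-1) * (b-1) : ℕ) := by rw [hnat]
        _ = ((n-1).choose (b-1) : ℝ) * ((b:ℝ) - 1) := by rw [← c2]; push_cast; ring
    field_simp
    linear_combination ((n:ℝ) - b) * id1 - (n:ℝ) * id2

open scoped RealInnerProductSpace in
lemma key_identity {n b : ℕ} (hn : 2 ≤ n) (hb1 : 1 ≤ b) (hbn : b ≤ n)
    (h : Fin n → E) (hsum : ∑ i, h i = 0) :
    ∑ s ∈ Finset.powersetCard b (Finset.univ : Finset (Fin n)), ‖∑ i ∈ s, h i‖ ^ 2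
      = ((n.choose b : ℝ) * b * ((n:ℝ) - b) / ((n:ℝ) * ((n:ℝ) - 1))) * ∑ i, ‖h i‖ ^ 2 := by
  set P := Finset.powersetCard b (Finset.univ : Finset (Fin n)) with hP
  set A : ℕ := (n-1).choose (b-1) with hA
  set Bv : ℕ := if b = 1 then 0 else (n-2).choose (b-2) with hBv
  have hpair : ∀ i j : Fin n, i ≠ j →
      (P.filter (fun s => i ∈ s ∧ j ∈ s)).card = Bv := by
    intro i j hij
    rcases eq_or_lt_of_le hb1 with hb | hb
    · rw [hBv, if_pos hb.symm, hP, ← hb]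
      exact count_pair_one i j hij
    · rw [hBv, if_neg (by omega)]
      exact count_pair i j hij b hb
  have step1 : ∑ s ∈ P, ‖∑ i ∈ s, h i‖ ^ 2
      = ∑ s ∈ P, ∑ i, ∑ j, (if i ∈ s ∧ j ∈ s then ⟪h i, h j⟫ else 0) := by
    refine Finset.sum_congr rfl fun s _ => ?_
    have ext1 : ∀ (F : Fin n → ℝ), ∑ i ∈ s, F i = ∑ i, if i ∈ s then F i else 0 := by
      intro F; rw [Finset.sum_ite_mem, Finset.univ_inter]
    rw [← real_inner_self_eq_norm_sq, sum_inner]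
    rw [Finset.sum_congr rfl (fun i (_ : i ∈ s) => inner_sum s h (h i))]
    rw [ext1]
    refine Finset.sum_congr rfl fun i _ => ?_
    by_cases hi : i ∈ s
    · simp only [hi, if_true, true_and]
      exact ext1 _
    · simp [hi]
  have step2 : ∑ s ∈ P, ∑ i, ∑ j, (if i ∈ s ∧ j ∈ s then ⟪h i, h j⟫ else 0)
      = ∑ i, ∑ j, ((if i = j then (A:ℝ) else (Bv:ℝ)) * ⟪h i, h j⟫) := by
    rw [Finset.sum_comm]
    refine Finset.sum_congr rfl fun i _ => ?_
    rw [Finset.sum_comm]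
    refine Finset.sum_congr rfl fun j _ => ?_
    rw [← Finset.sum_filter, Finset.sum_const, nsmul_eq_mul]
    by_cases hij : i = j
    · subst hij
      rw [if_pos rfl]
      have hc : (((P.filter fun a => i ∈ a ∧ i ∈ a)).card) = A := by
        simp only [and_self, hP, hA]
        exact count_single i b hb1
      rw [hc]
    · rw [if_neg hij, hpair i j hij]
  have inner_tot : ∑ i, ∑ j, ⟪h i, h j⟫ = (0:ℝ) := by
    have : ∑ i, ∑ j, ⟪h i, h j⟫ = ⟪∑ i, h i, ∑ j, h j⟫ := by
      rw [sum_inner]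
      exact Finset.sum_congr rfl fun i _ => (inner_sum _ _ _).symm
    rw [this, hsum, inner_zero_left]
  have step3 : ∑ i, ∑ j, ((if i = j then (A:ℝ) else (Bv:ℝ)) * ⟪h i, h j⟫)
      = ((A:ℝ) - (Bv:ℝ)) * ∑ i, ‖h i‖ ^ 2 := by
    have split : ∀ i j : Fin n, (if i = j then (A:ℝ) else (Bv:ℝ)) * ⟪h i, h j⟫
        = (Bv:ℝ) * ⟪h i, h j⟫ + (if i = j then ((A:ℝ) - Bv) * ⟪h i, h j⟫ else 0) := by
      intro i j; by_cases hij : i = j <;> simp [hij] <;> ring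
    simp only [split, Finset.sum_add_distrib]
    have e1 : (∑ i : Fin n, ∑ j : Fin n, (Bv:ℝ) * ⟪h i, h j⟫) = 0 := by
      simp_rw [← Finset.mul_sum]; rw [inner_tot, mul_zero]
    rw [e1, zero_add]
    have e2 : ∀ i : Fin n, (∑ j, if i = j then ((A:ℝ) - Bv) * ⟪h i, h j⟫ else 0)
        = ((A:ℝ) - Bv) * ‖h i‖ ^ 2 := by
      intro i
      rw [Finset.sum_ite_eq Finset.univ i (fun j => ((A:ℝ) - Bv) * ⟪h i, h j⟫)]
      simp [real_inner_self_eq_norm_sq]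
    rw [Finset.sum_congr rfl fun i _ => e2 i, ← Finset.mul_sum]
  rw [step1, step2, step3, ← coeff_eq hn hb1 hbn]

lemma gradient_invn_sum {d n : ℕ} (f : Fin n → EuclideanSpace ℝ (Fin d) → ℝ)
    (hdiff : ∀ i, Differentiable ℝ (f i)) (z : EuclideanSpace ℝ (Fin d)) :
    gradient (fun y => (n:ℝ)⁻¹ * ∑ i, f i y) z = (n:ℝ)⁻¹ • ∑ i, gradient (f i) z := by
  have hsum : HasFDerivAt (fun y => ∑ i, f i y)
      (∑ i, (InnerProductSpace.toDual ℝ _) (gradient (f i) z)) z := by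
    apply HasFDerivAt.fun_sum
    intro i _
    exact hasGradientAt_iff_hasFDerivAt.mp ((hdiff i z).hasGradientAt)
  have h2 : HasFDerivAt (fun y => (n:ℝ)⁻¹ * ∑ i, f i y)
      ((n:ℝ)⁻¹ • ∑ i, (InnerProductSpace.toDual ℝ _) (gradient (f i) z)) z :=
    hsum.const_mul _
  have hg : HasGradientAt (fun y => (n:ℝ)⁻¹ * ∑ i, f i y)
      ((n:ℝ)⁻¹ • ∑ i, gradient (f i) z) z := by
    rw [hasGradientAt_iff_hasFDerivAt]
    simpa [_root_.map_smul, map_sum] using h2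
  exact hg.gradient

set_option maxHeartbeats 1000000 in
/-- The `b`-minibatch without-replacement subsampling estimator `∇f_B` of the
finite-sum objective `F = (1/n)Σfᵢ` with convex `Lᵢ`-smooth components satisfies the expected
residual condition with constant `((n−b)/(b(n−1))) L_max`, provided every minimizer of `F` over
`X` is a stationary point.  The variance over the uniformly random size-`b` subset is written
as a normalized sum over all size-`b` subsets. -/
theorem subsampling_er_without_replacement
    {d n : ℕ} (hn : 2 ≤ n) (b : ℕ) (hb1 : 1 ≤ b) (hbn : b ≤ n)
    (X : Set (EuclideanSpace ℝ (Fin d)))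
    (f : Fin n → EuclideanSpace ℝ (Fin d) → ℝ)
    (hconv : ∀ i, ConvexOn ℝ X (f i)) (hdiff : ∀ i, Differentiable ℝ (f i))
    (L : Fin n → ℝ) (hL : ∀ i, 0 < L i)
    (hsmooth : ∀ i, ∀ x ∈ X, ∀ y ∈ X,
      ‖gradient (f i) x - gradient (f i) y‖ ^ 2 ≤ 2 * L i * breg (f i) x y)
    (hstat : ∀ xs ∈ X, (∀ y ∈ X, (n : ℝ)⁻¹ * ∑ i, f i xs ≤ (n : ℝ)⁻¹ * ∑ i, f i y) →
      gradient (fun z => (n : ℝ)⁻¹ * ∑ i, f i z) xs = 0) :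
    ∀ x ∈ X, ∀ xs ∈ X,
      (∀ y ∈ X, (n : ℝ)⁻¹ * ∑ i, f i xs ≤ (n : ℝ)⁻¹ * ∑ i, f i y) →
      (n.choose b : ℝ)⁻¹ *
          ∑ s ∈ Finset.powersetCard b (Finset.univ : Finset (Fin n)),
            ‖(b : ℝ)⁻¹ • ∑ i ∈ s, (gradient (f i) x - gradient (f i) xs)
              - (n.choose b : ℝ)⁻¹ •
                  ∑ s' ∈ Finset.powersetCard b (Finset.univ : Finset (Fin n)),
                    (b : ℝ)⁻¹ • ∑ i ∈ s', (gradient (f i) x - gradient (f i) xs)‖ ^ 2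
        ≤ 2 * (((n : ℝ) - b) / (b * ((n : ℝ) - 1))) * (⨆ i, L i)
            * ((n : ℝ)⁻¹ * ∑ i, f i x - (n : ℝ)⁻¹ * ∑ i, f i xs) := by
  intro x hx xs hxs hmin
  have hnR : (n : ℝ) ≠ 0 := by positivity
  have hn1R : (n : ℝ) - 1 ≠ 0 := by
    have : (2:ℝ) ≤ n := by exact_mod_cast hn; 
    linarith
  have hbR : (b : ℝ) ≠ 0 := by positivity
  have hCpos : 0 < n.choose b := Nat.choose_pos hbn
  have hCR : (n.choose b : ℝ) ≠ 0 := by positivity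
  set g : Fin n → EuclideanSpace ℝ (Fin d) :=
    fun i => gradient (f i) x - gradient (f i) xs with hg
  set m : EuclideanSpace ℝ (Fin d) := (n:ℝ)⁻¹ • ∑ i, g i with hm
  -- stationarity: sum of gradients at xs is zero
  have hgradsum : ∑ i, gradient (f i) xs = 0 := by
    have h0 := hstat xs hxs hmin
    rw [gradient_invn_sum f hdiff xs] at h0
    rcases smul_eq_zero.1 h0 with h | h
    · exact absurd h (inv_ne_zero hnR)
    · exact h
  -- the mean of the estimator
  have hmean : (n.choose b : ℝ)⁻¹ •
      ∑ s' ∈ Finset.powersetCard b (Finset.univ : Finset (Fin n)),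
        (b:ℝ)⁻¹ • ∑ i ∈ s', g i = m := by
    rw [← Finset.smul_sum, sum_powerset_sum hb1 g, smul_smul]
    rw [← Nat.cast_smul_eq_nsmul ℝ, smul_smul, hm]
    congr 1
    have id1 : (n:ℝ) * ((n-1).choose (b-1) : ℝ) = (n.choose b : ℝ) * b := by
      exact_mod_cast choose_id1 (by omega) hb1
    field_simp
    linear_combination id1
  set h : Fin n → EuclideanSpace ℝ (Fin d) := fun i => g i - m with hh
  have hsumg : ∑ i, g i = (n:ℝ) • m := by
    rw [hm, smul_smul, mul_inv_cancel₀ hnR, one_smul]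
  have hsumh : ∑ i, h i = 0 := by
    rw [hh]
    simp only [Finset.sum_sub_distrib, Finset.sum_const, Finset.card_univ, Fintype.card_fin]
    rw [hsumg, ← Nat.cast_smul_eq_nsmul ℝ, sub_self]
  -- rewrite the summand
  have hsummand : ∀ s ∈ Finset.powersetCard b (Finset.univ : Finset (Fin n)),
      ‖(b : ℝ)⁻¹ • ∑ i ∈ s, g i
        - (n.choose b : ℝ)⁻¹ •
            ∑ s' ∈ Finset.powersetCard b (Finset.univ : Finset (Fin n)),
              (b : ℝ)⁻¹ • ∑ i ∈ s', g i‖ ^ 2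
      = ((b:ℝ)⁻¹)^2 * ‖∑ i ∈ s, h i‖ ^ 2 := by
    intro s hs
    have hcard : s.card = b := (Finset.mem_powersetCard.1 hs).2
    have : ∑ i ∈ s, h i = ∑ i ∈ s, g i - (b:ℝ) • m := by
      rw [hh]
      simp only [Finset.sum_sub_distrib, Finset.sum_const, hcard]
      rw [← Nat.cast_smul_eq_nsmul ℝ]
    rw [hmean, this]
    have e : (b:ℝ)⁻¹ • (∑ i ∈ s, g i - (b:ℝ) • m) = (b:ℝ)⁻¹ • ∑ i ∈ s, g i - m := by
      rw [smul_sub, smul_smul, inv_mul_cancel₀ hbR, one_smul]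
    rw [← e, norm_smul, mul_pow, Real.norm_eq_abs, sq_abs]
  -- variance ≤ second moment
  have hvar : ∑ i, ‖h i‖ ^ 2 ≤ ∑ i, ‖g i‖ ^ 2 := by
    have expand : ∀ i : Fin n, ‖g i - m‖ ^ 2 = ‖g i‖ ^ 2 - 2 * ⟪g i, m⟫ + ‖m‖ ^ 2 :=
      fun i => norm_sub_sq_real _ _
    have e1 : ∑ i, ‖h i‖ ^ 2
        = ∑ i, ‖g i‖ ^ 2 - 2 * ⟪∑ i, g i, m⟫ + (n:ℝ) * ‖m‖ ^ 2 := by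
      simp only [hh, expand]
      rw [Finset.sum_add_distrib, Finset.sum_sub_distrib, sum_inner,
        Finset.sum_const, Finset.card_univ, Fintype.card_fin, nsmul_eq_mul]
      push_cast
      rw [← Finset.mul_sum, ← sum_inner]
    have e2 : ⟪∑ i, g i, m⟫ = (n:ℝ) * ‖m‖ ^ 2 := by
      rw [hsumg, real_inner_smul_left, real_inner_self_eq_norm_sq]
    rw [e1, e2]
    have : 0 ≤ (n:ℝ) * ‖m‖ ^ 2 := by positivity
    linarith
  -- smoothness bound
  have hnonempty : Nonempty (Fin n) := ⟨⟨0, by omega⟩⟩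
  have hLmax : ∀ i, L i ≤ ⨆ j, L j := fun i => le_ciSup (Set.Finite.bddAbove (Set.finite_range L)) i
  have hLmaxpos : 0 < ⨆ j, L j := lt_of_lt_of_le (hL ⟨0, by omega⟩) (hLmax _)
  have hbregnn : ∀ i, 0 ≤ breg (f i) x xs := by
    intro i
    have h1 := hsmooth i x hx xs hxs
    have h2 : (0:ℝ) ≤ ‖gradient (f i) x - gradient (f i) xs‖ ^ 2 := by positivity
    nlinarith [hL i]
  have hgbound : ∀ i, ‖g i‖ ^ 2 ≤ 2 * (⨆ j, L j) * breg (f i) x xs := by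
    intro i
    refine le_trans (hsmooth i x hx xs hxs) ?_
    have := hbregnn i
    nlinarith [hLmax i, hL i]
  have hsum2 : ∑ i, ‖g i‖ ^ 2 ≤ 2 * (⨆ j, L j) * ∑ i, breg (f i) x xs := by
    rw [Finset.mul_sum]
    exact Finset.sum_le_sum fun i _ => hgbound i
  -- Bregman sum equals function-value gap
  have hbregsum : ∑ i, breg (f i) x xs = ∑ i, f i x - ∑ i, f i xs := by
    unfold breg
    rw [Finset.sum_sub_distrib, Finset.sum_sub_distrib]
    have : ∑ i, @inner ℝ _ _ (gradient (f i) xs) (x - xs)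
        = @inner ℝ _ _ (∑ i, gradient (f i) xs) (x - xs) := (sum_inner _ _ _).symm
    rw [this, hgradsum, inner_zero_left, sub_zero]
  -- assemble
  have hLHS : (n.choose b : ℝ)⁻¹ *
      ∑ s ∈ Finset.powersetCard b (Finset.univ : Finset (Fin n)),
        ‖(b : ℝ)⁻¹ • ∑ i ∈ s, g i
          - (n.choose b : ℝ)⁻¹ •
              ∑ s' ∈ Finset.powersetCard b (Finset.univ : Finset (Fin n)),
                (b : ℝ)⁻¹ • ∑ i ∈ s', g i‖ ^ 2
      = (((n:ℝ) - b) / ((b:ℝ) * (n:ℝ) * ((n:ℝ) - 1))) * ∑ i, ‖h i‖ ^ 2 := by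
    rw [Finset.sum_congr rfl hsummand, ← Finset.mul_sum,
      key_identity hn hb1 hbn h hsumh]
    field_simp
  rw [hLHS]
  have hK : 0 ≤ (((n:ℝ) - b) / ((b:ℝ) * (n:ℝ) * ((n:ℝ) - 1))) := by
    have h1 : (b:ℝ) ≤ n := by exact_mod_cast hbn
    have h2 : (1:ℝ) ≤ n := by exact_mod_cast (by omega : 1 ≤ n)
    have h3 : (1:ℝ) ≤ b := by exact_mod_cast hb1
    apply div_nonneg (by linarith)
    have hb0 : (0:ℝ) < b := by linarith
    have hn0 : (0:ℝ) < n := by linarith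
    have h4 : (1:ℝ) < n := by exact_mod_cast (by omega : 1 < n)
    have := mul_pos (mul_pos hb0 hn0) (by linarith : (0:ℝ) < (n:ℝ) - 1)
    linarith
  calc (((n:ℝ) - b) / ((b:ℝ) * (n:ℝ) * ((n:ℝ) - 1))) * ∑ i, ‖h i‖ ^ 2
      ≤ (((n:ℝ) - b) / ((b:ℝ) * (n:ℝ) * ((n:ℝ) - 1))) * ∑ i, ‖g i‖ ^ 2 :=
        mul_le_mul_of_nonneg_left hvar hK
    _ ≤ (((n:ℝ) - b) / ((b:ℝ) * (n:ℝ) * ((n:ℝ) - 1)))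
          * (2 * (⨆ j, L j) * ∑ i, breg (f i) x xs) :=
        mul_le_mul_of_nonneg_left hsum2 hK
    _ = 2 * (((n : ℝ) - b) / (b * ((n : ℝ) - 1))) * (⨆ i, L i)
            * ((n : ℝ)⁻¹ * ∑ i, f i x - (n : ℝ)⁻¹ * ∑ i, f i xs) := by
        rw [hbregsum]
        field_simp
end

section
/- Let F = (1/n)(f_1 + … + f_n) with each f_i convex and L_i-smooth on X ⊆ ℝ^d (‖∇f_i(x) − ∇f_i(y)‖₂² ≤ 2L_i D_{f_i}(x,y)), let B ⊆ {1,…,n} be any fixed index set of size b, and let g_1, …, g_n be unbiased estimators of ∇f_1, …, ∇f_n each satisfying tr 𝕍[g_i(x) − g_i(y)] ≤ 2𝓛_i D_{f_i}(x, y) for all x, y ∈ X. Then for g_B(x) = (1/b)Σ_{i∈B} g_i(x) and any minimizer x* of F over X, E‖g_B(x) − g_B(x*)‖₂² ≤ 2(𝓛_max + L_max) D_{f_B}(x, x*) for all x ∈ X, where f_B = (1/b)Σ_{i∈B} f_i, 𝓛_max = max{𝓛_1,…,𝓛_n}, and L_max = max{L_1,…,L_n}. -/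
open MeasureTheory ProbabilityTheory
open scoped ENNReal

/-- Cauchy–Schwarz averaging bound. -/
lemma norm_avg_sq_le {E : Type*} [NormedAddCommGroup E] [NormedSpace ℝ E] {ι : Type*}
    (s : Finset ι) (u : ι → E) :
    ‖(s.card : ℝ)⁻¹ • ∑ i ∈ s, u i‖ ^ 2 ≤ (s.card : ℝ)⁻¹ * ∑ i ∈ s, ‖u i‖ ^ 2 := by
  rcases s.eq_empty_or_nonempty with rfl | hs
  · simp
  · have hc : (0 : ℝ) < s.card := by exact_mod_cast hs.card_pos
    have h1 : ‖∑ i ∈ s, u i‖ ^ 2 ≤ (s.card : ℝ) * ∑ i ∈ s, ‖u i‖ ^ 2 := by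
      calc ‖∑ i ∈ s, u i‖ ^ 2 ≤ (∑ i ∈ s, ‖u i‖) ^ 2 := by
            exact pow_le_pow_left₀ (norm_nonneg _) (norm_sum_le s u) 2
        _ ≤ (s.card : ℝ) * ∑ i ∈ s, ‖u i‖ ^ 2 := by
            exact_mod_cast sq_sum_le_card_mul_sum_sq (s := s) (f := fun i => ‖u i‖)
    rw [norm_smul]
    have : |(s.card : ℝ)⁻¹| = (s.card : ℝ)⁻¹ := abs_of_pos (by positivity)
    rw [Real.norm_eq_abs, this, mul_pow]
    calc (s.card : ℝ)⁻¹ ^ 2 * ‖∑ i ∈ s, u i‖ ^ 2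
        ≤ (s.card : ℝ)⁻¹ ^ 2 * ((s.card : ℝ) * ∑ i ∈ s, ‖u i‖ ^ 2) := by
          apply mul_le_mul_of_nonneg_left h1 (by positivity)
      _ = (s.card : ℝ)⁻¹ * ∑ i ∈ s, ‖u i‖ ^ 2 := by
          field_simp

/-- Second moment = variance + squared mean. -/
lemma integral_norm_sq_eq_trVar_add {Ω : Type*} [MeasurableSpace Ω] (μ : Measure Ω)
    [IsProbabilityMeasure μ]
    {E : Type*} [NormedAddCommGroup E] [InnerProductSpace ℝ E] [CompleteSpace E]
    {w : Ω → E} (hw : MemLp w 2 μ) :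
    ∫ ω, ‖w ω‖ ^ 2 ∂μ = trVar μ w + ‖∫ ω, w ω ∂μ‖ ^ 2 := by
  set m := ∫ ω, w ω ∂μ with hm
  have hInt : Integrable w μ := hw.integrable one_le_two
  have h1 : Integrable (fun ω => ‖w ω‖ ^ 2) μ := hw.norm.integrable_sq
  have h2 : Integrable (fun ω => (inner ℝ m (w ω) : ℝ)) μ :=
    (innerSL ℝ m).integrable_comp hInt
  have hint : ∫ ω, (inner ℝ m (w ω) : ℝ) ∂μ = ‖m‖ ^ 2 := by
    rw [integral_inner hInt m, ← hm, real_inner_self_eq_norm_sq]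
  have hpt : ∀ ω, ‖w ω - m‖ ^ 2 = ‖w ω‖ ^ 2 - 2 * (inner ℝ m (w ω) : ℝ) + ‖m‖ ^ 2 := by
    intro ω
    rw [norm_sub_sq_real, real_inner_comm]
  have : trVar μ w = ∫ ω, (‖w ω‖ ^ 2 - 2 * (inner ℝ m (w ω) : ℝ) + ‖m‖ ^ 2) ∂μ := by
    unfold trVar
    rw [← hm]
    exact integral_congr_ae (Filter.Eventually.of_forall hpt)
  have e1 : ∫ ω, (‖w ω‖ ^ 2 - 2 * (inner ℝ m (w ω) : ℝ) + ‖m‖ ^ 2) ∂μ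
      = (∫ ω, ‖w ω‖ ^ 2 ∂μ) - 2 * ‖m‖ ^ 2 + ‖m‖ ^ 2 := by
    have hsub : Integrable (fun ω => ‖w ω‖ ^ 2 - 2 * (inner ℝ m (w ω) : ℝ)) μ :=
      h1.sub (h2.const_mul 2)
    rw [integral_add hsub (integrable_const _),
      integral_sub h1 (h2.const_mul 2), integral_const_mul, hint, integral_const]
    simp
  rw [this, e1]
  ring

/-- First-order condition: Bregman divergence of a differentiable convex function is nonneg. -/
lemma breg_nonneg' {E : Type*} [NormedAddCommGroup E] [InnerProductSpace ℝ E] [CompleteSpace E]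
    {X : Set E} {f : E → ℝ} (hconv : ConvexOn ℝ X f) (hdiff : Differentiable ℝ f)
    {x y : E} (hx : x ∈ X) (hy : y ∈ X) : 0 ≤ breg f x y := by
  rcases eq_or_ne x y with rfl | hxy
  · simp [breg]
  have key : (inner ℝ (gradient f y) (x - y) : ℝ) ≤ f x - f y := by
    set c : ℝ →ᵃ[ℝ] E := AffineMap.lineMap y x with hc
    have hφconv : ConvexOn ℝ (c ⁻¹' X) (f ∘ c) := hconv.comp_affineMap c
    have h0 : (0 : ℝ) ∈ c ⁻¹' X := by simp [hc, AffineMap.lineMap_apply_zero, hy]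
    have h1 : (1 : ℝ) ∈ c ⁻¹' X := by simp [hc, AffineMap.lineMap_apply_one, hx]
    have hcd : HasDerivAt (fun t : ℝ => c t) (x - y) 0 := by
      have ha : HasDerivAt (fun t : ℝ => (1 - t) • y + t • x)
          (((0:ℝ) - 1) • y + (1 : ℝ) • x) 0 := by
        exact (((hasDerivAt_const (0:ℝ) (1:ℝ)).sub (hasDerivAt_id 0)).smul_const y).add
          ((hasDerivAt_id (0:ℝ)).smul_const x)
      have : (((0:ℝ) - 1) • y + (1 : ℝ) • x) = x - y := by
        simp; abel
      rw [this] at ha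
      refine ha.congr_of_eventuallyEq (Filter.Eventually.of_forall fun t => ?_)
      simp [hc, AffineMap.lineMap_apply_module]
    have hgrad : HasFDerivAt f (InnerProductSpace.toDual ℝ E (gradient f y)) y :=
      (hdiff y).hasGradientAt
    have hcomp : HasDerivAt (f ∘ c) ((inner ℝ (gradient f y) (x - y) : ℝ)) 0 := by
      have h0' : c 0 = y := by simp [hc]
      have hgrad' : HasFDerivAt f (InnerProductSpace.toDual ℝ E (gradient f y)) (c 0) := by
        rw [h0']; exact hgrad
      have := hgrad'.comp_hasDerivAt 0 hcd
      simpa [InnerProductSpace.toDual_apply_apply] using this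
    have := hφconv.le_slope_of_hasDerivAt h0 h1 one_pos hcomp
    have hs : slope (f ∘ c) 0 1 = f x - f y := by
      simp [slope_def_field, hc, AffineMap.lineMap_apply_zero, AffineMap.lineMap_apply_one]
    linarith [this, hs ▸ this]
  unfold breg
  linarith

/-- Gradient of `z ↦ c * ∑ i ∈ B, f i z`. -/
lemma gradient_const_mul_sum {E : Type*} [NormedAddCommGroup E] [InnerProductSpace ℝ E]
    [CompleteSpace E] {ι : Type*} (B : Finset ι) (f : ι → E → ℝ)
    (hdiff : ∀ i, Differentiable ℝ (f i)) (c : ℝ) (y : E) :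
    gradient (fun z => c * ∑ i ∈ B, f i z) y = c • ∑ i ∈ B, gradient (f i) y := by
  have hsum : HasFDerivAt (fun z => ∑ i ∈ B, f i z)
      (∑ i ∈ B, InnerProductSpace.toDual ℝ E (gradient (f i) y)) y :=
    HasFDerivAt.fun_sum fun i _ => (hdiff i y).hasGradientAt
  have hmul : HasFDerivAt (fun z => c * ∑ i ∈ B, f i z)
      (c • ∑ i ∈ B, InnerProductSpace.toDual ℝ E (gradient (f i) y)) y :=
    hsum.const_mul c
  have : HasGradientAt (fun z => c * ∑ i ∈ B, f i z)
      ((InnerProductSpace.toDual ℝ E).symm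
        (c • ∑ i ∈ B, InnerProductSpace.toDual ℝ E (gradient (f i) y))) y :=
    hasFDerivAt_iff_hasGradientAt.mp hmul
  rw [this.gradient]
  simp [_root_.map_smul, map_sum]
  rfl

/-- Expected smoothness of the minibatch estimator for a fixed batch `B`:
if each component `fᵢ` is convex and `Lᵢ`-smooth and each estimator `gᵢ` satisfies the convex
expected-residual condition with constant `𝓛ᵢ`, then
`E‖g_B(x) − g_B(x*)‖² ≤ 2(𝓛_max + L_max) D_{f_B}(x, x*)`. -/
theorem fixed_batch_expected_smoothness
    {d n : ℕ} (hn : 0 < n)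
    {Ω : Type*} [MeasurableSpace Ω] (μ : Measure Ω) [IsProbabilityMeasure μ]
    (X : Set (EuclideanSpace ℝ (Fin d)))
    (f : Fin n → EuclideanSpace ℝ (Fin d) → ℝ)
    (hconv : ∀ i, ConvexOn ℝ X (f i)) (hdiff : ∀ i, Differentiable ℝ (f i))
    (L : Fin n → ℝ) (hL : ∀ i, 0 < L i)
    (hsmooth : ∀ i, ∀ x ∈ X, ∀ y ∈ X,
      ‖gradient (f i) x - gradient (f i) y‖ ^ 2 ≤ 2 * L i * breg (f i) x y)
    (g : Fin n → EuclideanSpace ℝ (Fin d) → Ω → EuclideanSpace ℝ (Fin d))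
    (hmem : ∀ i, ∀ x ∈ X, MemLp (g i x) 2 μ)
    (hunbiased : ∀ i, ∀ x ∈ X, ∫ ω, g i x ω ∂μ = gradient (f i) x)
    (𝓛 : Fin n → ℝ) (h𝓛 : ∀ i, 0 < 𝓛 i)
    (hAcvx : ∀ i, ∀ x ∈ X, ∀ y ∈ X,
      trVar μ (fun ω => g i x ω - g i y ω) ≤ 2 * 𝓛 i * breg (f i) x y)
    -- a fixed (deterministic) index set of size `b`
    (b : ℕ) (hb : 0 < b) (B : Finset (Fin n)) (hcard : B.card = b) :
    ∀ x ∈ X, ∀ xs ∈ X,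
      (∀ y ∈ X, (n : ℝ)⁻¹ * ∑ i, f i xs ≤ (n : ℝ)⁻¹ * ∑ i, f i y) →
      ∫ ω, ‖(b : ℝ)⁻¹ • ∑ i ∈ B, g i x ω - (b : ℝ)⁻¹ • ∑ i ∈ B, g i xs ω‖ ^ 2 ∂μ
        ≤ 2 * ((⨆ i, 𝓛 i) + (⨆ i, L i))
            * breg (fun z => (b : ℝ)⁻¹ * ∑ i ∈ B, f i z) x xs := by
  intro x hx xs hxs _hmin
  classical
  set v : Fin n → Ω → EuclideanSpace ℝ (Fin d) := fun i ω => g i x ω - g i xs ω with hv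
  have hvmem : ∀ i, MemLp (v i) 2 μ := fun i => (hmem i x hx).sub (hmem i xs hxs)
  have hvint : ∀ i, Integrable (v i) μ := fun i => (hvmem i).integrable one_le_two
  set h : Ω → EuclideanSpace ℝ (Fin d) := fun ω => (b : ℝ)⁻¹ • ∑ i ∈ B, v i ω with hh
  have hhmem : MemLp h 2 μ := by
    have h0 := (memLp_finset_sum' B (fun i _ => hvmem i)).const_smul ((b : ℝ)⁻¹)
    have he : ((b : ℝ)⁻¹ • ∑ i ∈ B, v i) = h := by
      funext ω; simp [hh, Finset.sum_apply]
    rwa [he] at h0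
  -- rewrite the LHS integrand
  have hLHS : (∫ ω, ‖(b : ℝ)⁻¹ • ∑ i ∈ B, g i x ω - (b : ℝ)⁻¹ • ∑ i ∈ B, g i xs ω‖ ^ 2 ∂μ)
      = ∫ ω, ‖h ω‖ ^ 2 ∂μ := by
    refine integral_congr_ae (Filter.Eventually.of_forall fun ω => ?_)
    have : (b : ℝ)⁻¹ • ∑ i ∈ B, g i x ω - (b : ℝ)⁻¹ • ∑ i ∈ B, g i xs ω = h ω := by
      simp [hh, hv, Finset.sum_sub_distrib, smul_sub]
    exact congrArg (fun z => ‖z‖ ^ 2) this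
  -- means
  have hmi : ∀ i, ∫ ω, v i ω ∂μ = gradient (f i) x - gradient (f i) xs := by
    intro i
    rw [hv]
    rw [integral_sub ((hmem i x hx).integrable one_le_two)
      ((hmem i xs hxs).integrable one_le_two), hunbiased i x hx, hunbiased i xs hxs]
  have hmh : ∫ ω, h ω ∂μ = (b : ℝ)⁻¹ • ∑ i ∈ B, (gradient (f i) x - gradient (f i) xs) := by
    rw [hh, integral_smul, integral_finset_sum B (fun i _ => hvint i)]
    congr 1
    exact Finset.sum_congr rfl fun i _ => hmi i
  have hdecomp := integral_norm_sq_eq_trVar_add μ hhmem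
  -- bregman nonneg, sup bounds, D
  have hbnn : ∀ i : Fin n, 0 ≤ breg (f i) x xs := fun i =>
    breg_nonneg' (hconv i) (hdiff i) hx hxs
  have h𝓛le : ∀ i, 𝓛 i ≤ ⨆ j, 𝓛 j := fun i =>
    le_ciSup (Set.Finite.bddAbove (Set.finite_range 𝓛)) i
  have hLle : ∀ i, L i ≤ ⨆ j, L j := fun i =>
    le_ciSup (Set.Finite.bddAbove (Set.finite_range L)) i
  set D : ℝ := (b : ℝ)⁻¹ * ∑ i ∈ B, breg (f i) x xs with hD
  -- variance bound
  have hvarh : trVar μ h ≤ (b : ℝ)⁻¹ * ∑ i ∈ B, trVar μ (v i) := by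
    have intEach : ∀ i : Fin n,
        Integrable (fun ω => ‖v i ω - ∫ ω', v i ω' ∂μ‖ ^ 2) μ := fun i =>
      ((hvmem i).sub (memLp_const _)).norm.integrable_sq
    have intLHS : Integrable (fun ω => ‖h ω - ∫ ω', h ω' ∂μ‖ ^ 2) μ :=
      (hhmem.sub (memLp_const _)).norm.integrable_sq
    have intRHS : Integrable
        (fun ω => (b : ℝ)⁻¹ * ∑ i ∈ B, ‖v i ω - ∫ ω', v i ω' ∂μ‖ ^ 2) μ :=
      (integrable_finset_sum B fun i _ => intEach i).const_mul _
    have hpt : ∀ ω, ‖h ω - ∫ ω', h ω' ∂μ‖ ^ 2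
        ≤ (b : ℝ)⁻¹ * ∑ i ∈ B, ‖v i ω - ∫ ω', v i ω' ∂μ‖ ^ 2 := by
      intro ω
      have he : h ω - ∫ ω', h ω' ∂μ
          = (b : ℝ)⁻¹ • ∑ i ∈ B, (v i ω - ∫ ω', v i ω' ∂μ) := by
        have : ∫ ω', h ω' ∂μ = (b : ℝ)⁻¹ • ∑ i ∈ B, ∫ ω', v i ω' ∂μ := by
          rw [hh, integral_smul, integral_finset_sum B (fun i _ => hvint i)]
        rw [this, hh]
        simp [Finset.sum_sub_distrib, smul_sub]
      rw [he]
      have := norm_avg_sq_le B (fun i => v i ω - ∫ ω', v i ω' ∂μ)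
      rwa [hcard] at this
    calc trVar μ h = ∫ ω, ‖h ω - ∫ ω', h ω' ∂μ‖ ^ 2 ∂μ := rfl
      _ ≤ ∫ ω, (b : ℝ)⁻¹ * ∑ i ∈ B, ‖v i ω - ∫ ω', v i ω' ∂μ‖ ^ 2 ∂μ :=
          integral_mono intLHS intRHS hpt
      _ = (b : ℝ)⁻¹ * ∑ i ∈ B, trVar μ (v i) := by
          rw [integral_const_mul, integral_finset_sum B (fun i _ => intEach i)]
          rfl
  have hvar_total : trVar μ h ≤ 2 * (⨆ j, 𝓛 j) * D := by
    calc trVar μ h ≤ (b : ℝ)⁻¹ * ∑ i ∈ B, trVar μ (v i) := hvarh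
      _ ≤ (b : ℝ)⁻¹ * ∑ i ∈ B, 2 * (⨆ j, 𝓛 j) * breg (f i) x xs := by
          refine mul_le_mul_of_nonneg_left (Finset.sum_le_sum fun i _ => ?_) (by positivity)
          calc trVar μ (v i) ≤ 2 * 𝓛 i * breg (f i) x xs := hAcvx i x hx xs hxs
            _ ≤ 2 * (⨆ j, 𝓛 j) * breg (f i) x xs := by
                refine mul_le_mul_of_nonneg_right ?_ (hbnn i)
                have := h𝓛le i; linarith
      _ = 2 * (⨆ j, 𝓛 j) * D := by rw [← Finset.mul_sum, hD]; ring
  -- mean bound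
  have hmean : ‖∫ ω, h ω ∂μ‖ ^ 2 ≤ 2 * (⨆ j, L j) * D := by
    rw [hmh]
    have h1 := norm_avg_sq_le B (fun i => gradient (f i) x - gradient (f i) xs)
    rw [hcard] at h1
    refine h1.trans ?_
    calc (b : ℝ)⁻¹ * ∑ i ∈ B, ‖gradient (f i) x - gradient (f i) xs‖ ^ 2
        ≤ (b : ℝ)⁻¹ * ∑ i ∈ B, 2 * (⨆ j, L j) * breg (f i) x xs := by
          refine mul_le_mul_of_nonneg_left (Finset.sum_le_sum fun i _ => ?_) (by positivity)
          calc ‖gradient (f i) x - gradient (f i) xs‖ ^ 2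
              ≤ 2 * L i * breg (f i) x xs := hsmooth i x hx xs hxs
            _ ≤ 2 * (⨆ j, L j) * breg (f i) x xs := by
                refine mul_le_mul_of_nonneg_right ?_ (hbnn i)
                have := hLle i; linarith
      _ = 2 * (⨆ j, L j) * D := by rw [← Finset.mul_sum, hD]; ring
  -- bregman of the batch average
  have hbregB : breg (fun z => (b : ℝ)⁻¹ * ∑ i ∈ B, f i z) x xs = D := by
    unfold breg
    rw [gradient_const_mul_sum B f hdiff, real_inner_smul_left, sum_inner, hD]
    simp only [breg]
    rw [Finset.sum_sub_distrib, Finset.sum_sub_distrib]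
    ring
  rw [hLHS, hdecomp, hbregB]
  calc trVar μ h + ‖∫ ω, h ω ∂μ‖ ^ 2
      ≤ 2 * (⨆ j, 𝓛 j) * D + 2 * (⨆ j, L j) * D := add_le_add hvar_total hmean
    _ = 2 * ((⨆ i, 𝓛 i) + (⨆ i, L i)) * D := by ring
end
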